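/- arXiv:1602.04505 — 4 statements merged into one kernel-verified Lean document; each statement's English description precedes it below -/
import Mathlib

section
/- Let G be a 3-connected finite simple graph and (Y,S,Z) a proper separation of G of order 3 that is non-degenerate. Then the torso G⟦Z ∪ S⟧ is a faithful minor of G. -/
variable {V : Type*} {W : Type*}

/-- A separation (Y,S,Z) of a graph: pairwise disjoint sets covering the vertex set,
with no edge between Y and Z. -/
def IsSeparation (G : SimpleGraph V) (Y S Z : Set V) : Prop :=
  Disjoint Y S ∧ Disjoint Y Z ∧ Disjoint S Z ∧ Y ∪ S ∪ Z = Set.univ ∧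
    ∀ y ∈ Y, ∀ z ∈ Z, ¬ G.Adj y z

/-- `G` is `k`-connected: more than `k` vertices and no proper separation of order `< k`. -/
def KConnected (k : ℕ) (G : SimpleGraph V) : Prop :=
  k < Nat.card V ∧
    ∀ Y S Z : Set V, IsSeparation G Y S Z → Y.Nonempty → Z.Nonempty → k ≤ S.ncard

/-- `G` is quasi-4-connected. -/
def Quasi4Connected (G : SimpleGraph V) : Prop :=
  KConnected 3 G ∧
    ∀ Y S Z : Set V, IsSeparation G Y S Z → S.ncard = 3 → Y.ncard ≤ 1 ∨ Z.ncard ≤ 1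

/-- `T` is a `G`-tangle of order `k`. -/
def IsTangle (G : SimpleGraph V) (k : ℕ) (T : Set (Set V × Set V × Set V)) : Prop :=
  (∀ p ∈ T, IsSeparation G p.1 p.2.1 p.2.2 ∧ p.2.1.ncard < k) ∧
  (∀ Y S Z : Set V, IsSeparation G Y S Z → S.ncard < k →
    (Y, S, Z) ∈ T ∨ (Z, S, Y) ∈ T) ∧
  (∀ p₁ ∈ T, ∀ p₂ ∈ T, ∀ p₃ ∈ T,
    (p₁.2.2 ∩ p₂.2.2 ∩ p₃.2.2 : Set V).Nonempty ∨
      ∃ u v : V, G.Adj u v ∧ (u ∈ p₁.2.2 ∨ v ∈ p₁.2.2) ∧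
        (u ∈ p₂.2.2 ∨ v ∈ p₂.2.2) ∧ (u ∈ p₃.2.2 ∨ v ∈ p₃.2.2)) ∧
  (∀ p ∈ T, (p.2.2 : Set V).Nonempty)

/-- The order `⪯` on separations: (Y,S,Z) ⪯ (Y',S',Z') iff S ∪ Z ⊊ S' ∪ Z', or
S ∪ Z = S' ∪ Z' and S ⊆ S'. -/
def SepLE (p q : Set V × Set V × Set V) : Prop :=
  p.2.1 ∪ p.2.2 ⊂ q.2.1 ∪ q.2.2 ∨
    (p.2.1 ∪ p.2.2 = q.2.1 ∪ q.2.2 ∧ p.2.1 ⊆ q.2.1)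

/-- `p` is a `⪯`-minimal element of `T`. -/
def IsMinimalIn (T : Set (Set V × Set V × Set V)) (p : Set V × Set V × Set V) : Prop :=
  p ∈ T ∧ ∀ q ∈ T, SepLE q p → q = p

/-- Two separations are orthogonal. (They cross if they are not orthogonal.) -/
def SepOrthogonal (p q : Set V × Set V × Set V) : Prop :=
  (p.1 ∪ p.2.1) ∩ (q.1 ∪ q.2.1) ⊆ p.2.1 ∩ q.2.1

/-- A separation (Y,S,Z) is degenerate: |Y| = 1 and S is an independent set. -/
def Degenerate (G : SimpleGraph V) (Y S Z : Set V) : Prop :=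
  Y.ncard = 1 ∧ ∀ u ∈ S, ∀ v ∈ S, ¬ G.Adj u v

/-- The neighbourhood N(X): vertices outside X adjacent to a vertex of X. -/
def Nbhd (G : SimpleGraph V) (X : Set V) : Set V :=
  {v | v ∉ X ∧ ∃ u ∈ X, G.Adj u v}

/-- `C` is (the vertex set of) a connected component of `G − X`. -/
def IsCompOutside (G : SimpleGraph V) (X C : Set V) : Prop :=
  C ⊆ Xᶜ ∧ (G.induce C).Connected ∧ ∀ u ∈ C, ∀ v : V, v ∉ X → G.Adj u v → v ∈ C

/-- The torso `G⟦X⟧` of `X` in `G`. -/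
def torso (G : SimpleGraph V) (X : Set V) : SimpleGraph X where
  Adj u v := u ≠ v ∧ (G.Adj (u : V) (v : V) ∨
    ∃ C : Set V, IsCompOutside G X C ∧ (u : V) ∈ Nbhd G C ∧ (v : V) ∈ Nbhd G C)
  symm := by
    constructor
    rintro u v ⟨hne, h | ⟨C, hC, hu, hv⟩⟩
    · exact ⟨hne.symm, Or.inl h.symm⟩
    · exact ⟨hne.symm, Or.inr ⟨C, hC, hv, hu⟩⟩
  loopless := by
    constructor
    intro u h
    exact h.1 rfl

/-- `H` is a minor of `G`. -/
def IsMinor (H : SimpleGraph W) (G : SimpleGraph V) : Prop :=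
  ∃ M : W → Set V,
    (∀ w : W, (G.induce (M w)).Connected) ∧
    (Pairwise fun w w' : W => Disjoint (M w) (M w')) ∧
    ∀ w w' : W, H.Adj w w' → ∃ u ∈ M w, ∃ v ∈ M w', G.Adj u v

/-- `M` is a faithful model of the graph `H` (with vertex set `X ⊆ V(G)`) in `G`. -/
def FaithfulModel (G : SimpleGraph V) (X : Set V) (H : SimpleGraph X)
    (M : X → Set V) : Prop :=
  (∀ w : X, (w : V) ∈ M w) ∧
  (∀ w : X, (G.induce (M w)).Connected) ∧
  (Pairwise fun w w' : X => Disjoint (M w) (M w')) ∧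
  ∀ w w' : X, H.Adj w w' → ∃ u ∈ M w, ∃ v ∈ M w', G.Adj u v

/-- `H` (a graph with vertex set `X ⊆ V(G)`) is a faithful minor of `G`. -/
def IsFaithfulMinor (G : SimpleGraph V) (X : Set V) (H : SimpleGraph X) : Prop :=
  ∃ M : X → Set V, FaithfulModel G X H M

/-- The projection of a separation of `G` to a minor with model `M`. -/
def projSep {X : Set V} (M : X → Set V) (p : Set V × Set V × Set V) :
    Set X × Set X × Set X :=
  ({w : X | M w ⊆ p.1}, {w : X | (M w ∩ p.2.1).Nonempty}, {w : X | M w ⊆ p.2.2})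

/-- The graph TH₊₃: vertices 0,1,2,3 are v₁,v₂,v₃,v₄ (pairwise adjacent); 4,5,6 are
w₁,w₂,w₃ with w₁ ~ v₁,v₂,v₃, w₂ ~ v₁,v₂,v₄, w₃ ~ v₁,v₃,v₄. -/
def TH3 : SimpleGraph (Fin 7) :=
  SimpleGraph.fromRel (fun u v =>
    (u.val < 4 ∧ v.val < 4) ∨
    (u.val = 4 ∧ (v.val = 0 ∨ v.val = 1 ∨ v.val = 2)) ∨
    (u.val = 5 ∧ (v.val = 0 ∨ v.val = 1 ∨ v.val = 3)) ∨
    (u.val = 6 ∧ (v.val = 0 ∨ v.val = 2 ∨ v.val = 3)))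

/-- The graph TR₊₃: vertices 0,1,2 are v₁,v₂,v₃ (pairwise adjacent); 3,4,5 are
w₁,w₂,w₃, each adjacent to each of v₁,v₂,v₃. -/
def TR3 : SimpleGraph (Fin 6) :=
  SimpleGraph.fromRel (fun u v =>
    (u.val < 3 ∧ v.val < 3) ∨ (3 ≤ u.val ∧ v.val < 3))

/-- A graph is exceptional if it embeds (injectively, preserving adjacency)
into TH₊₃ or into TR₊₃. -/
def Exceptional (H : SimpleGraph W) : Prop :=
  (∃ f : W → Fin 7, Function.Injective f ∧ ∀ u v : W, H.Adj u v → TH3.Adj (f u) (f v)) ∨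
  (∃ f : W → Fin 6, Function.Injective f ∧ ∀ u v : W, H.Adj u v → TR3.Adj (f u) (f v))

/-- `X` is a `k`-inseparable set of `G`. -/
def KInseparable (G : SimpleGraph V) (k : ℕ) (X : Set V) : Prop :=
  k < X.ncard ∧
    ¬ ∃ Y S Z : Set V, IsSeparation G Y S Z ∧ S.ncard ≤ k ∧
      (X ∩ Y).Nonempty ∧ (X ∩ Z).Nonempty

/-- A triconnected region: a maximal 2-inseparable set of size ≥ 4. -/
def TriconnectedRegion (G : SimpleGraph V) (R : Set V) : Prop :=
  KInseparable G 2 R ∧ 4 ≤ R.ncard ∧ ∀ R' : Set V, R ⊂ R' → ¬ KInseparable G 2 R'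

/-- `H` is a topological subgraph of `G`. -/
def IsTopologicalSubgraph (H : SimpleGraph W) (G : SimpleGraph V) : Prop :=
  ∃ (φ : W → V) (P : ∀ u v : W, H.Adj u v → G.Walk (φ u) (φ v)),
    Function.Injective φ ∧
    (∀ u v (h : H.Adj u v), (P u v h).IsPath) ∧
    (∀ u v (h : H.Adj u v), P u v h = (P v u h.symm).reverse) ∧
    (∀ u v (h : H.Adj u v), ∀ x ∈ (P u v h).support,
      x ∈ Set.range φ → x = φ u ∨ x = φ v) ∧
    (∀ u v (h : H.Adj u v), ∀ u' v' (h' : H.Adj u' v'), s(u, v) ≠ s(u', v') →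
      ∀ x ∈ (P u v h).support, x ∈ (P u' v' h').support →
        (x = φ u ∨ x = φ v) ∧ (x = φ u' ∨ x = φ v'))

/-- A quasi-4-connected region of a 3-connected graph. -/
def Quasi4Region (G : SimpleGraph V) (R : Set V) : Prop :=
  IsFaithfulMinor G R (torso G R) ∧ Quasi4Connected (torso G R) ∧
    ∀ C : Set V, IsCompOutside G R C → (Nbhd G C).ncard = 3

/-- A split vertex of a separation (Y₀,S₀,Z₀). -/
def SplitVertex (G : SimpleGraph V) (S₀ Z₀ : Set V) (z : V) : Prop :=
  z ∈ Z₀ ∧ ∀ C : Set V, IsCompOutside G (S₀ ∪ {z}) C → (Nbhd G C).ncard = 3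

/-- The graph obtained from `G` by contracting the edge `s₁s₂` onto `s₁`. -/
def contractEdge (G : SimpleGraph V) (s₁ s₂ : V) : SimpleGraph ({s₂}ᶜ : Set V) where
  Adj u v := u ≠ v ∧ (G.Adj (u : V) (v : V) ∨
    ((u : V) = s₁ ∧ G.Adj (v : V) s₂) ∨ ((v : V) = s₁ ∧ G.Adj (u : V) s₂))
  symm := by
    constructor
    rintro u v ⟨hne, h | h | h⟩
    · exact ⟨hne.symm, Or.inl h.symm⟩
    · exact ⟨hne.symm, Or.inr (Or.inr h)⟩
    · exact ⟨hne.symm, Or.inr (Or.inl h)⟩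
  loopless := by
    constructor
    intro u h
    exact h.1 rfl

/-- `s t` are the endvertices of a crossedge of two crossing non-degenerate minimal
separations of the tangle `T`, with `s ∈ S₁` and `t ∈ S₂`. -/
def IsNondegCrossedge (G : SimpleGraph V) (T : Set (Set V × Set V × Set V))
    (s t : V) : Prop :=
  ∃ p q : Set V × Set V × Set V,
    IsMinimalIn T p ∧ IsMinimalIn T q ∧
    ¬ Degenerate G p.1 p.2.1 p.2.2 ∧ ¬ Degenerate G q.1 q.2.1 q.2.2 ∧
    ¬ SepOrthogonal p q ∧ G.Adj s t ∧ p.2.1 ∩ q.1 = {s} ∧ q.2.1 ∩ p.1 = {t}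

namespace St12
/-- adjacency within a vertex set -/
def AdjIn (G : SimpleGraph V) (A : Set V) (x y : V) : Prop :=
  x ∈ A ∧ y ∈ A ∧ G.Adj x y

/-- reachability within a vertex set -/
def ReachIn (G : SimpleGraph V) (A : Set V) : V → V → Prop :=
  Relation.ReflTransGen (AdjIn G A)

/-- connectedness of the subgraph induced on a set, phrased combinatorially -/
def ConnIn (G : SimpleGraph V) (A : Set V) : Prop :=
  A.Nonempty ∧ ∀ x ∈ A, ∀ y ∈ A, ReachIn G A x y

variable {G : SimpleGraph V} {A B P Q : Set V} {x y z : V}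

lemma ReachIn.mono (h : A ⊆ B) (hr : ReachIn G A x y) : ReachIn G B x y := by
  induction hr with
  | refl => exact Relation.ReflTransGen.refl
  | tail _ hab ih => exact Relation.ReflTransGen.tail ih ⟨h hab.1, h hab.2.1, hab.2.2⟩

lemma ReachIn.symm (hr : ReachIn G A x y) : ReachIn G A y x := by
  induction hr with
  | refl => exact Relation.ReflTransGen.refl
  | tail _ hab ih =>
    exact Relation.ReflTransGen.trans
      (Relation.ReflTransGen.single ⟨hab.2.1, hab.1, hab.2.2.symm⟩) ih

lemma ReachIn.trans (h1 : ReachIn G A x y) (h2 : ReachIn G A y z) : ReachIn G A x z :=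
  Relation.ReflTransGen.trans h1 h2

lemma ReachIn.mem_right (hx : x ∈ A) (hr : ReachIn G A x y) : y ∈ A := by
  cases (Relation.ReflTransGen.cases_tail hr) with
  | inl h => exact h ▸ hx
  | inr h => obtain ⟨b, _, hb⟩ := h; exact hb.2.1

lemma connIn_singleton : ConnIn G {x} := by
  refine ⟨⟨x, rfl⟩, ?_⟩
  rintro a rfl b rfl
  exact Relation.ReflTransGen.refl

lemma connIn_pair (h : G.Adj x y) : ConnIn G {x, y} := by
  have hxy : ReachIn G {x, y} x y :=
    Relation.ReflTransGen.single ⟨Or.inl rfl, Or.inr rfl, h⟩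
  refine ⟨⟨x, Or.inl rfl⟩, ?_⟩
  rintro a (rfl | rfl) b (rfl | rfl)
  · exact Relation.ReflTransGen.refl
  · exact hxy
  · exact hxy.symm
  · exact Relation.ReflTransGen.refl

/-- attach a new vertex to a connected set -/
lemma connIn_insert (hA : ConnIn G A) (ha : y ∈ A) (hadj : G.Adj x y) (hx : x ∉ A) :
    ConnIn G (insert x A) := by
  have hxy : ReachIn G (insert x A) x y :=
    Relation.ReflTransGen.single ⟨Or.inl rfl, Or.inr ha, hadj⟩
  have key : ∀ b ∈ A, ReachIn G (insert x A) x b := fun b hb =>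
    hxy.trans ((hA.2 y ha b hb).mono (Set.subset_insert _ _))
  refine ⟨⟨x, Or.inl rfl⟩, ?_⟩
  rintro a (rfl | haA) b (rfl | hbA)
  · exact Relation.ReflTransGen.refl
  · exact key b hbA
  · exact (key a haA).symm
  · exact ((key a haA).symm).trans (key b hbA)

lemma connIn_union_edge (hA : ConnIn G A) (hB : ConnIn G B) (hx : x ∈ A) (hy : y ∈ B)
    (hadj : G.Adj x y) : ConnIn G (A ∪ B) := by
  have hstep : ReachIn G (A ∪ B) x y :=
    Relation.ReflTransGen.single ⟨Or.inl hx, Or.inr hy, hadj⟩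
  have keyA : ∀ a ∈ A, ReachIn G (A ∪ B) a x := fun a ha =>
    (hA.2 a ha x hx).mono Set.subset_union_left
  have keyB : ∀ b ∈ B, ReachIn G (A ∪ B) y b := fun b hb =>
    (hB.2 y hy b hb).mono Set.subset_union_right
  have key : ∀ a ∈ A ∪ B, ReachIn G (A ∪ B) a y := by
    rintro a (ha | ha)
    · exact (keyA a ha).trans hstep
    · exact (keyB a ha).symm
  refine ⟨⟨x, Or.inl hx⟩, fun a ha b hb => (key a ha).trans (key b hb).symm⟩

/-- a connected set split into two parts has an edge between them -/
lemma connIn_cross (hY : ConnIn G A) (hU : P ∪ Q = A) (hP : P.Nonempty) (hQ : Q.Nonempty)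
    (hd : ∀ v, v ∈ P → v ∈ Q → False) :
    ∃ p ∈ P, ∃ q ∈ Q, G.Adj p q := by
  obtain ⟨p, hp⟩ := hP
  obtain ⟨q, hq⟩ := hQ
  have hr : ReachIn G A p q := hY.2 p (hU ▸ Or.inl hp) q (hU ▸ Or.inr hq)
  clear hY
  induction hr using Relation.ReflTransGen.head_induction_on with
  | refl => exact absurd hp (fun h => hd q h hq)
  | head hab _ ih =>
    rename_i c d _
    by_cases hdQ : d ∈ Q
    · exact ⟨c, hp, d, hdQ, hab.2.2⟩
    · have hdP : d ∈ P := by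
        have : d ∈ P ∪ Q := hU ▸ hab.2.1
        rcases this with h | h
        · exact h
        · exact absurd h hdQ
      exact ih hdP


/-- the component of `x` within `A` -/
def CompIn (G : SimpleGraph V) (A : Set V) (x : V) : Set V :=
  {y ∈ A | ReachIn G A x y}

lemma compIn_subset : CompIn G A x ⊆ A := fun _ h => h.1

lemma mem_compIn_self (hx : x ∈ A) : x ∈ CompIn G A x :=
  ⟨hx, Relation.ReflTransGen.refl⟩

lemma compIn_closed (hu : y ∈ CompIn G A x) (hv : z ∈ A) (hadj : G.Adj y z) :
    z ∈ CompIn G A x :=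
  ⟨hv, hu.2.tail ⟨hu.1, hv, hadj⟩⟩

lemma reachIn_compIn (hx : x ∈ A) (hr : ReachIn G A x y) :
    ReachIn G (CompIn G A x) x y := by
  induction hr with
  | refl => exact Relation.ReflTransGen.refl
  | tail hxb hbc ih =>
    exact ih.tail ⟨⟨hbc.1, hxb⟩, ⟨hbc.2.1, hxb.tail hbc⟩, hbc.2.2⟩

lemma connIn_compIn (hx : x ∈ A) : ConnIn G (CompIn G A x) := by
  refine ⟨⟨x, mem_compIn_self hx⟩, fun a ha b hb => ?_⟩
  exact (reachIn_compIn hx ha.2).symm.trans (reachIn_compIn hx hb.2)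

lemma compIn_eq_of_mem (hx : x ∈ A) (h : y ∈ CompIn G A x) :
    CompIn G A y = CompIn G A x := by
  ext v
  constructor
  · rintro ⟨hv, hr⟩
    exact ⟨hv, h.2.trans hr⟩
  · rintro ⟨hv, hr⟩
    exact ⟨hv, h.2.symm.trans hr⟩

lemma compIn_disjoint (hyA : y ∈ A) (hy : y ∉ CompIn G A x) :
    ∀ v, v ∈ CompIn G A x → v ∈ CompIn G A y → False := by
  intro v hvx hvy
  exact hy ⟨hyA, hvx.2.trans hvy.2.symm⟩

/-- every component of `A ∖ {r}` attaches to `r` when `A` is connected;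
more precisely the complement of a component is connected (contains r). -/
lemma connIn_compl_comp (hA : ConnIn G A) (hr : x ∈ A) (hxne : y ∈ A \ {x}) :
    ConnIn G (A \ CompIn G (A \ {x}) y) := by
  set K := CompIn G (A \ {x}) y with hK
  have hKsub : K ⊆ A \ {x} := compIn_subset
  have hxK : x ∉ K := fun h => (hKsub h).2 rfl
  have hxmem : x ∈ A \ K := ⟨hr, hxK⟩
  have key : ∀ z ∈ A \ K, ReachIn G (A \ K) z x := by
    intro z hz
    rcases eq_or_ne z x with rfl | hzx
    · exact Relation.ReflTransGen.refl
    · have hzA : z ∈ A \ {x} := ⟨hz.1, hzx⟩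
      set W := CompIn G (A \ {x}) z with hW
      have hWsub : W ⊆ A \ {x} := compIn_subset
      have hWK : ∀ v, v ∈ W → v ∈ K → False := by
        intro v hvW hvK
        exact compIn_disjoint hzA (fun h => hz.2 h) v hvK hvW
      -- find an edge from W to x
      obtain ⟨w, hwW, u, hu, hadj⟩ :=
        connIn_cross hA (Set.union_diff_cancel (hWsub.trans (Set.diff_subset))) 
          ⟨z, mem_compIn_self hzA⟩ ⟨x, hr, hxK |> fun _ => (fun h => (hWsub h).2 rfl)⟩
          (fun v hv1 hv2 => hv2.2 hv1)
      have hux : u = x := by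
        by_contra hne
        have : u ∈ W := compIn_closed hwW ⟨hu.1, hne⟩ hadj
        exact hu.2 this
      subst hux
      have h1 : ReachIn G W z w := (connIn_compIn hzA).2 z (mem_compIn_self hzA) w hwW
      have hWAK : W ⊆ A \ K := fun v hv => ⟨(hWsub hv).1, fun h => hWK v hv h⟩
      exact (h1.mono hWAK).tail ⟨hWAK hwW, hxmem, hadj⟩
  refine ⟨⟨x, hxmem⟩, fun a ha b hb => (key a ha).trans (key b hb).symm⟩


namespace NC
variable {G : SimpleGraph V} {A : Set V}

lemma exists_noncut_aux : ∀ (n : ℕ) (A : Set V), A.Finite → ConnIn G A → 2 ≤ A.ncard →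
    A.ncard = n → ∀ a ∈ A, ∃ v ∈ A, v ≠ a ∧ ConnIn G (A \ {v}) := by
  intro n
  induction n using Nat.strong_induction_on with
  | _ n ih =>
  intro A hfin hA h2 hn a ha
  obtain ⟨b, hbA, hba⟩ := Set.exists_ne_of_one_lt_ncard (s := A) (by omega) a
  by_cases hc : ConnIn G (A \ {b})
  · exact ⟨b, hbA, hba, hc⟩
  have haAb : a ∈ A \ {b} := ⟨ha, fun h => hba h.symm⟩
  have hz : ∃ z ∈ A \ {b}, z ∉ CompIn G (A \ {b}) a := by
    by_contra h; push_neg at h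
    exact hc ⟨⟨a, haAb⟩, fun u hu v hv => (h u hu).2.symm.trans (h v hv).2⟩
  obtain ⟨z, hzA, hzCa⟩ := hz
  set K := CompIn G (A \ {b}) z with hKdef
  have hKsub : K ⊆ A \ {b} := compIn_subset
  have haK : a ∉ K := fun h => hzCa ⟨hzA, (h : a ∈ K).2.symm⟩
  have hbK : b ∉ K := fun h => (hKsub h).2 rfl
  obtain ⟨k, hkK, u, hu, hadj⟩ :=
    connIn_cross hA (Set.union_diff_cancel (hKsub.trans Set.diff_subset))
      ⟨z, mem_compIn_self hzA⟩ ⟨b, hbA, hbK⟩ (fun v hv1 hv2 => hv2.2 hv1)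
  have hub : u = b := by
    by_contra hne
    exact hu.2 (compIn_closed hkK ⟨hu.1, hne⟩ hadj)
  subst hub
  have hA' : ConnIn G (insert u K) :=
    connIn_insert (connIn_compIn hzA) hkK hadj.symm hbK
  have hsub : insert u K ⊆ A := Set.insert_subset hu.1 (hKsub.trans Set.diff_subset)
  have hss : insert u K ⊂ A := by
    refine ⟨hsub, fun hAsub => ?_⟩
    rcases hAsub ha with h | h
    · exact hba h.symm
    · exact haK h
  have hlt : (insert u K).ncard < n := hn ▸ Set.ncard_lt_ncard hss hfin
  have h2' : 2 ≤ (insert u K).ncard := by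
    rw [Nat.succ_le_iff]
    exact (Set.one_lt_ncard (hfin.subset hsub)).mpr
      ⟨u, Set.mem_insert _ _, z, Set.mem_insert_of_mem _ (mem_compIn_self hzA),
        fun h => hzA.2 h.symm⟩
  obtain ⟨v, hv, hvb, hconn'⟩ := ih _ hlt (insert u K) (hfin.subset hsub) hA' h2' rfl
    u (Set.mem_insert _ _)
  have hvK : v ∈ K := by
    rcases hv with h | h
    · exact absurd h hvb
    · exact h
  have hva : v ≠ a := fun h => haK (h ▸ hvK)
  have hbv : u ∈ A \ {v} := ⟨hu.1, fun h => hvb (Set.mem_singleton_iff.mp h).symm⟩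
  have key : ∀ w ∈ A \ {v}, ReachIn G (A \ {v}) w u := by
    intro w hw
    by_cases hwA' : w ∈ insert u K
    · have hr : ReachIn G (insert u K \ {v}) w u :=
        hconn'.2 w ⟨hwA', hw.2⟩ u ⟨Set.mem_insert _ _, fun h => hvb (Set.mem_singleton_iff.mp h).symm⟩
      exact hr.mono (fun t ht => ⟨hsub ht.1, ht.2⟩)
    · have hwb : w ≠ u := fun h => hwA' (h ▸ Set.mem_insert _ _)
      have hwK : w ∉ K := fun h => hwA' (Set.mem_insert_of_mem _ h)
      have hwAb : w ∈ A \ {u} := ⟨hw.1, hwb⟩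
      set W := CompIn G (A \ {u}) w with hWdef
      have hWsub : W ⊆ A \ {u} := compIn_subset
      have hWK : ∀ t, t ∈ W → t ∈ K → False := by
        intro t htW htK
        exact compIn_disjoint hwAb hwK t htK htW
      obtain ⟨w', hw'W, u', hu', hadj'⟩ :=
        connIn_cross hA (Set.union_diff_cancel (hWsub.trans Set.diff_subset))
          ⟨w, mem_compIn_self hwAb⟩ ⟨u, hu.1, fun h => (hWsub h).2 rfl⟩
          (fun t ht1 ht2 => ht2.2 ht1)
      have hu'b : u' = u := by
        by_contra hne
        exact hu'.2 (compIn_closed hw'W ⟨hu'.1, hne⟩ hadj')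
      subst hu'b
      have h1 : ReachIn G W w w' := (connIn_compIn hwAb).2 w (mem_compIn_self hwAb) w' hw'W
      have hWAv : W ⊆ A \ {v} := fun t ht =>
        ⟨(hWsub ht).1, fun h => hWK t ht ((Set.mem_singleton_iff.mp h) ▸ hvK)⟩
      exact (h1.mono hWAv).tail ⟨hWAv hw'W, hbv, hadj'⟩
  exact ⟨v, hKsub.trans Set.diff_subset hvK, hva,
    ⟨⟨u, hbv⟩, fun p hp q hq => (key p hp).trans (key q hq).symm⟩⟩

end NC

lemma exists_noncut {G : SimpleGraph V} {A : Set V} (hfin : A.Finite) (hA : ConnIn G A)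
    (h2 : 2 ≤ A.ncard) : ∃ v ∈ A, ConnIn G (A \ {v}) := by
  obtain ⟨a, ha⟩ := hA.1
  obtain ⟨v, hv, _, hc⟩ := NC.exists_noncut_aux A.ncard A hfin hA h2 rfl a ha
  exact ⟨v, hv, hc⟩


lemma fin3_cover : ∀ (i j k m : Fin 3), i ≠ j → i ≠ k → j ≠ k → m = i ∨ m = j ∨ m = k := by
  decide

lemma fin3_others : ∀ i : Fin 3, ∃ j k, i ≠ j ∧ i ≠ k ∧ j ≠ k := by decide

lemma fin3_meet : ∀ (x y i j : Fin 3), x ≠ y → i ≠ j → x = i ∨ x = j ∨ y = i ∨ y = j := by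
  decide

variable (G : SimpleGraph V) (Y : Set V) (t : Fin 3 → V)

/-- the goal: three connected branch sets realizing a triangle on the three terminals -/
def GoalProp : Prop :=
  ∃ B : Fin 3 → Set V,
    (∀ m, t m ∈ B m) ∧ (∀ m, B m ⊆ Y ∪ {t m}) ∧ (∀ m, ConnIn G (B m)) ∧
    (∀ m m', m ≠ m' → ∀ v, v ∈ B m → v ∈ B m' → False) ∧
    (∀ m m', m ≠ m' → ∃ u ∈ B m, ∃ v ∈ B m', G.Adj u v)

variable {G Y t}

lemma buildGoal {i j k : Fin 3} (hij : i ≠ j) (hik : i ≠ k) (hjk : j ≠ k)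
    {Bi Bj Bk : Set V}
    (mi : t i ∈ Bi) (mj : t j ∈ Bj) (mk : t k ∈ Bk)
    (si : Bi ⊆ Y ∪ {t i}) (sj : Bj ⊆ Y ∪ {t j}) (sk : Bk ⊆ Y ∪ {t k})
    (ci : ConnIn G Bi) (cj : ConnIn G Bj) (ck : ConnIn G Bk)
    (dij : ∀ v, v ∈ Bi → v ∈ Bj → False)
    (dik : ∀ v, v ∈ Bi → v ∈ Bk → False)
    (djk : ∀ v, v ∈ Bj → v ∈ Bk → False)
    (eij : ∃ u ∈ Bi, ∃ v ∈ Bj, G.Adj u v)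
    (eik : ∃ u ∈ Bi, ∃ v ∈ Bk, G.Adj u v)
    (ejk : ∃ u ∈ Bj, ∃ v ∈ Bk, G.Adj u v) :
    GoalProp G Y t := by
  classical
  set B : Fin 3 → Set V := fun m => if m = i then Bi else if m = j then Bj else Bk with hB
  have hBi : B i = Bi := by simp [hB]
  have hBj : B j = Bj := by simp [hB, Ne.symm hij]
  have hBk : B k = Bk := by simp [hB, Ne.symm hik, Ne.symm hjk]
  refine ⟨B, ?_, ?_, ?_, ?_, ?_⟩
  · intro m
    rcases fin3_cover i j k m hij hik hjk with h | h | h <;> rw [h]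
    · rw [hBi]; exact mi
    · rw [hBj]; exact mj
    · rw [hBk]; exact mk
  · intro m
    rcases fin3_cover i j k m hij hik hjk with h | h | h <;> rw [h]
    · rw [hBi]; exact si
    · rw [hBj]; exact sj
    · rw [hBk]; exact sk
  · intro m
    rcases fin3_cover i j k m hij hik hjk with h | h | h <;> rw [h]
    · rw [hBi]; exact ci
    · rw [hBj]; exact cj
    · rw [hBk]; exact ck
  · intro m m' hmm'
    rcases fin3_cover i j k m hij hik hjk with h | h | h <;>
      rcases fin3_cover i j k m' hij hik hjk with h' | h' | h' <;>
      rw [h, h'] at hmm' ⊢ <;>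
      simp only [hBi, hBj, hBk] <;>
      first
        | exact absurd rfl hmm'
        | exact dij
        | exact dik
        | exact djk
        | exact fun v h1 h2 => dij v h2 h1
        | exact fun v h1 h2 => dik v h2 h1
        | exact fun v h1 h2 => djk v h2 h1
  · intro m m' hmm'
    rcases fin3_cover i j k m hij hik hjk with h | h | h <;>
      rcases fin3_cover i j k m' hij hik hjk with h' | h' | h' <;>
      rw [h, h'] at hmm' ⊢ <;>
      simp only [hBi, hBj, hBk] <;>
      first
        | exact absurd rfl hmm'
        | exact eij
        | exact eik
        | exact ejk
        | exact (let ⟨u, hu, v, hv, hh⟩ := eij; ⟨v, hv, u, hu, hh.symm⟩)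
        | exact (let ⟨u, hu, v, hv, hh⟩ := eik; ⟨v, hv, u, hu, hh.symm⟩)
        | exact (let ⟨u, hu, v, hv, hh⟩ := ejk; ⟨v, hv, u, hu, hh.symm⟩)


section Hard

variable {G : SimpleGraph V} {Y : Set V} {t : Fin 3 → V}

lemma fin3_third : ∀ i j : Fin 3, i ≠ j → ∃ k, i ≠ k ∧ j ≠ k := by decide

/-- every terminal has a neighbour in Y -/
lemma attach_all (hYne : Y.Nonempty)
    (hF : ∀ A, A ⊆ Y → A.Nonempty → 3 ≤ (Nbhd G A).ncard)
    (hNY : ∀ y ∈ Y, ∀ v, G.Adj y v → v ∈ Y ∨ ∃ m, v = t m)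
    (i : Fin 3) : ∃ y ∈ Y, G.Adj (t i) y := by
  by_contra hcon; push_neg at hcon
  obtain ⟨j, k, hij, hik, hjk⟩ := fin3_others i
  have hsub : Nbhd G Y ⊆ {t j, t k} := by
    rintro v ⟨hvY, u, huY, hadj⟩
    rcases hNY u huY v hadj with h1 | ⟨m, rfl⟩
    · exact absurd h1 hvY
    · rcases fin3_cover i j k m hij hik hjk with rfl | rfl | rfl
      · exact absurd hadj.symm (hcon u huY)
      · exact Or.inl rfl
      · exact Or.inr rfl
  have h3 := hF Y subset_rfl hYne
  have h2 : (Nbhd G Y).ncard ≤ 2 :=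
    le_trans (Set.ncard_le_ncard hsub (Set.toFinite _))
      (le_trans (Set.ncard_insert_le _ _) (by simp))
  omega

/-- two terminals pinned to the same single vertex is impossible -/
lemma pin_contra
    (hF : ∀ A, A ⊆ Y → A.Nonempty → 3 ≤ (Nbhd G A).ncard)
    (hNY : ∀ y ∈ Y, ∀ v, G.Adj y v → v ∈ Y ∨ ∃ m, v = t m)
    (a b : Fin 3) (hab : a ≠ b) (r : V) (hne : (Y \ {r}).Nonempty)
    (ha : ∀ y ∈ Y, G.Adj (t a) y → y = r) (hb : ∀ y ∈ Y, G.Adj (t b) y → y = r) :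
    False := by
  obtain ⟨c, hac, hbc⟩ := fin3_third a b hab
  have hsub : Nbhd G (Y \ {r}) ⊆ {r, t c} := by
    rintro w ⟨hw, u, hu, hadj⟩
    rcases hNY u hu.1 w hadj with h1 | ⟨m, rfl⟩
    · left
      by_contra hne'
      exact hw ⟨h1, fun hh => hne' (Set.mem_singleton_iff.mp hh)⟩
    · rcases fin3_cover a b c m hab hac hbc with rfl | rfl | rfl
      · exact absurd (ha u hu.1 hadj.symm) (fun hh => hu.2 (hh ▸ rfl))
      · exact absurd (hb u hu.1 hadj.symm) (fun hh => hu.2 (hh ▸ rfl))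
      · exact Or.inr rfl
  have h3 := hF (Y \ {r}) Set.diff_subset hne
  have h2 : (Nbhd G (Y \ {r})).ncard ≤ 2 :=
    le_trans (Set.ncard_le_ncard hsub (Set.toFinite _))
      (le_trans (Set.ncard_insert_le _ _) (by simp))
  omega

/-- the dichotomy for connected partitions: either a winning triple exists
or two terminals have all their Y-neighbours on one side -/
lemma dichotomy (htY : ∀ i, t i ∉ Y) (htinj : Function.Injective t)
    (hYconn : ConnIn G Y)
    (hF : ∀ A, A ⊆ Y → A.Nonempty → 3 ≤ (Nbhd G A).ncard)
    (hNY : ∀ y ∈ Y, ∀ v, G.Adj y v → v ∈ Y ∨ ∃ m, v = t m)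
    (hng : ¬ GoalProp G Y t)
    (P Q : Set V) (hU : P ∪ Q = Y) (hd : ∀ v, v ∈ P → v ∈ Q → False)
    (hPne : P.Nonempty) (hQne : Q.Nonempty) (hPc : ConnIn G P) (hQc : ConnIn G Q) :
    (∃ i j : Fin 3, i ≠ j ∧ (∀ q ∈ Q, ¬ G.Adj (t i) q) ∧ (∀ q ∈ Q, ¬ G.Adj (t j) q)) ∨
    (∃ i j : Fin 3, i ≠ j ∧ (∀ p ∈ P, ¬ G.Adj (t i) p) ∧ (∀ p ∈ P, ¬ G.Adj (t j) p)) := by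
  have hsubP : P ⊆ Y := hU ▸ Set.subset_union_left
  have hsubQ : Q ⊆ Y := hU ▸ Set.subset_union_right
  have hab : ∀ i : Fin 3, (∃ p ∈ P, G.Adj (t i) p) ∨ (∃ q ∈ Q, G.Adj (t i) q) := by
    intro i
    obtain ⟨y, hy, hadj⟩ := attach_all hYconn.1 hF hNY i
    rcases (hU ▸ hy : y ∈ P ∪ Q) with h | h
    · exact Or.inl ⟨y, h, hadj⟩
    · exact Or.inr ⟨y, h, hadj⟩
  have hwin : ∀ k i j : Fin 3, k ≠ i → k ≠ j → i ≠ j →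
      (∃ p ∈ P, G.Adj (t k) p) → (∃ q ∈ Q, G.Adj (t k) q) →
      (∃ p ∈ P, G.Adj (t i) p) → (∃ q ∈ Q, G.Adj (t j) q) → False := by
    intro k i j hki hkj hij hkP hkQ hiP hjQ
    obtain ⟨pk, hpk, hpkadj⟩ := hkP
    obtain ⟨qk, hqk, hqkadj⟩ := hkQ
    obtain ⟨pi, hpi, hpiadj⟩ := hiP
    obtain ⟨qj, hqj, hqjadj⟩ := hjQ
    obtain ⟨p', hp', q', hq', hcross⟩ := connIn_cross hYconn hU hPne hQne hd
    apply hng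
    refine buildGoal (i := k) (j := i) (k := j) hki hkj hij
      (Bi := {t k}) (Bj := insert (t i) P) (Bk := insert (t j) Q)
      rfl (Set.mem_insert _ _) (Set.mem_insert _ _)
      (fun v hv => Or.inr hv)
      (Set.insert_subset_iff.mpr ⟨Or.inr rfl, fun v hv => Or.inl (hsubP hv)⟩)
      (Set.insert_subset_iff.mpr ⟨Or.inr rfl, fun v hv => Or.inl (hsubQ hv)⟩)
      connIn_singleton
      (connIn_insert hPc hpi hpiadj (fun h => htY i (hsubP h)))
      (connIn_insert hQc hqj hqjadj (fun h => htY j (hsubQ h)))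
      ?_ ?_ ?_ ?_ ?_ ?_
    · rintro v rfl (h | h)
      · exact hki (htinj h)
      · exact htY k (hsubP h)
    · rintro v rfl (h | h)
      · exact hkj (htinj h)
      · exact htY k (hsubQ h)
    · rintro v (rfl | hvP) (h | h)
      · exact hij (htinj h)
      · exact htY i (hsubQ h)
      · exact htY j (hsubP (h ▸ hvP))
      · exact hd v hvP h
    · exact ⟨t k, rfl, pk, Set.mem_insert_of_mem _ hpk, hpkadj⟩
    · exact ⟨t k, rfl, qk, Set.mem_insert_of_mem _ hqk, hqkadj⟩
    · exact ⟨p', Set.mem_insert_of_mem _ hp', q', Set.mem_insert_of_mem _ hq', hcross⟩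
  by_cases hpq : ∃ k : Fin 3, (∃ p ∈ P, G.Adj (t k) p) ∧ (∃ q ∈ Q, G.Adj (t k) q)
  · obtain ⟨k, hkP, hkQ⟩ := hpq
    obtain ⟨i, j, hki, hkj, hij⟩ := fin3_others k
    have h1 : ¬ ((∃ p ∈ P, G.Adj (t i) p) ∧ (∃ q ∈ Q, G.Adj (t j) q)) :=
      fun ⟨x1, x2⟩ => hwin k i j hki hkj hij hkP hkQ x1 x2
    have h2 : ¬ ((∃ p ∈ P, G.Adj (t j) p) ∧ (∃ q ∈ Q, G.Adj (t i) q)) :=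
      fun ⟨x1, x2⟩ => hwin k j i hkj hki (Ne.symm hij) hkP hkQ x1 x2
    by_cases hai : ∃ p ∈ P, G.Adj (t i) p
    · have hbj : ¬ ∃ q ∈ Q, G.Adj (t j) q := fun h => h1 ⟨hai, h⟩
      have haj : ∃ p ∈ P, G.Adj (t j) p := (hab j).resolve_right hbj
      have hbi : ¬ ∃ q ∈ Q, G.Adj (t i) q := fun h => h2 ⟨haj, h⟩
      exact Or.inl ⟨i, j, hij, fun q hq hadj => hbi ⟨q, hq, hadj⟩,
        fun q hq hadj => hbj ⟨q, hq, hadj⟩⟩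
    · have hbi : ∃ q ∈ Q, G.Adj (t i) q := (hab i).resolve_left hai
      have haj : ¬ ∃ p ∈ P, G.Adj (t j) p := fun h => h2 ⟨h, hbi⟩
      exact Or.inr ⟨i, j, hij, fun p hp hadj => hai ⟨p, hp, hadj⟩,
        fun p hp hadj => haj ⟨p, hp, hadj⟩⟩
  · push_neg at hpq
    have pureP : ∀ m : Fin 3, (∃ p ∈ P, G.Adj (t m) p) → ∀ q ∈ Q, ¬ G.Adj (t m) q :=
      fun m hm q hq hadj => hpq m hm q hq hadj
    have pureQ : ∀ m : Fin 3, ¬ (∃ p ∈ P, G.Adj (t m) p) → ∀ p ∈ P, ¬ G.Adj (t m) p :=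
      fun m hm p hp hadj => hm ⟨p, hp, hadj⟩
    by_cases h0 : ∃ p ∈ P, G.Adj (t 0) p
    · by_cases h1 : ∃ p ∈ P, G.Adj (t 1) p
      · exact Or.inl ⟨0, 1, by decide, pureP 0 h0, pureP 1 h1⟩
      · by_cases h2 : ∃ p ∈ P, G.Adj (t 2) p
        · exact Or.inl ⟨0, 2, by decide, pureP 0 h0, pureP 2 h2⟩
        · exact Or.inr ⟨1, 2, by decide, pureQ 1 h1, pureQ 2 h2⟩
    · by_cases h1 : ∃ p ∈ P, G.Adj (t 1) p
      · by_cases h2 : ∃ p ∈ P, G.Adj (t 2) p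
        · exact Or.inl ⟨1, 2, by decide, pureP 1 h1, pureP 2 h2⟩
        · exact Or.inr ⟨0, 2, by decide, pureQ 0 h0, pureQ 2 h2⟩
      · exact Or.inr ⟨0, 1, by decide, pureQ 0 h0, pureQ 1 h1⟩

/-- the main hard case: Y connected with at least 2 vertices -/
theorem hardCase [Fintype V] (htY : ∀ i, t i ∉ Y) (htinj : Function.Injective t)
    (hYconn : ConnIn G Y) (hY2 : 2 ≤ Y.ncard)
    (hF : ∀ A, A ⊆ Y → A.Nonempty → 3 ≤ (Nbhd G A).ncard)
    (hNY : ∀ y ∈ Y, ∀ v, G.Adj y v → v ∈ Y ∨ ∃ m, v = t m) :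
    GoalProp G Y t := by
  by_contra hng
  have hfinY : Y.Finite := Set.toFinite _
  -- the family of "pure-pair" partitions
  set PP : Set V → Set V → Prop := fun P Q =>
    P ∪ Q = Y ∧ (∀ v, v ∈ P → v ∈ Q → False) ∧ P.Nonempty ∧ Q.Nonempty ∧
    ConnIn G P ∧ ConnIn G Q ∧
    (∃ i j : Fin 3, i ≠ j ∧ (∀ q ∈ Q, ¬ G.Adj (t i) q) ∧ (∀ q ∈ Q, ¬ G.Adj (t j) q)) with hPPdef
  -- existence of a pure-pair partition
  have hPPex : ∃ P Q, PP P Q := by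
    obtain ⟨v, hvY, hvconn⟩ := exists_noncut hfinY hYconn hY2
    obtain ⟨b, hbY, hbv⟩ := Set.exists_ne_of_one_lt_ncard (s := Y) (by omega) v
    have hYvne : (Y \ {v}).Nonempty := ⟨b, hbY, hbv⟩
    have hU1 : {v} ∪ (Y \ {v}) = Y := Set.union_diff_cancel (by simpa using hvY)
    have hd1 : ∀ u, u ∈ ({v} : Set V) → u ∈ Y \ {v} → False := by
      rintro u rfl hu
      exact hu.2 rfl
    rcases dichotomy htY htinj hYconn hF hNY hng {v} (Y \ {v}) hU1 hd1
        ⟨v, rfl⟩ hYvne connIn_singleton hvconn with hp | hp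
    · exact ⟨{v}, Y \ {v}, hU1, hd1, ⟨v, rfl⟩, hYvne, connIn_singleton, hvconn, hp⟩
    · refine ⟨Y \ {v}, {v}, ?_, fun u hu1 hu2 => hd1 u hu2 hu1, hYvne, ⟨v, rfl⟩,
        hvconn, connIn_singleton, hp⟩
      rw [Set.union_comm]; exact hU1
  -- a minimal pure-pair partition
  have hNN : {n : ℕ | ∃ P Q, PP P Q ∧ P.ncard = n}.Nonempty := by
    obtain ⟨P, Q, h⟩ := hPPex
    exact ⟨P.ncard, P, Q, h, rfl⟩
  obtain ⟨P, Q, hPP, hPn⟩ := Nat.sInf_mem hNN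
  have hminP : ∀ P' Q', PP P' Q' → P.ncard ≤ P'.ncard := by
    intro P' Q' h
    rw [hPn]
    exact Nat.sInf_le ⟨P', Q', h, rfl⟩
  obtain ⟨hU, hd, hPne, hQne, hPc, hQc, i, j, hij, hiQ, hjQ⟩ := hPP
  have hsubP : P ⊆ Y := hU ▸ Set.subset_union_left
  have hsubQ : Q ⊆ Y := hU ▸ Set.subset_union_right
  obtain ⟨k, hik, hjk⟩ := fin3_third i j hij
  -- the attachment set of Q in P
  set R : Set V := {r | r ∈ P ∧ ∃ q ∈ Q, G.Adj r q} with hRdef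
  have hRP : R ⊆ P := fun r hr => hr.1
  have hNbhdQ : Nbhd G Q ⊆ insert (t k) R := by
    rintro w ⟨hwQ, u, huQ, hadj⟩
    rcases hNY u (hsubQ huQ) w hadj with h1 | ⟨m, rfl⟩
    · refine Or.inr ⟨?_, u, huQ, hadj.symm⟩
      rcases (hU ▸ h1 : w ∈ P ∪ Q) with h | h
      · exact h
      · exact absurd h hwQ
    · rcases fin3_cover i j k m hij hik hjk with rfl | rfl | rfl
      · exact absurd hadj.symm (hiQ u huQ)
      · exact absurd hadj.symm (hjQ u huQ)
      · exact Or.inl rfl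
  have hR2 : ∃ r1 ∈ R, ∃ r2 ∈ R, r1 ≠ r2 := by
    by_contra hcon; push_neg at hcon
    have hRsub : (insert (t k) R).ncard ≤ 2 := by
      rcases R.eq_empty_or_nonempty with h | ⟨r0, hr0⟩
      · rw [h]; simp
      · have hsub' : insert (t k) R ⊆ {t k, r0} := by
          intro w hw
          rcases hw with rfl | hw
          · exact Or.inl rfl
          · exact Or.inr (hcon w hw r0 hr0)
        exact le_trans (Set.ncard_le_ncard hsub' (Set.toFinite _))
          (le_trans (Set.ncard_insert_le _ _) (by simp))
    have h3 := hF Q hsubQ hQne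
    have h4 := Set.ncard_le_ncard hNbhdQ (Set.toFinite _)
    omega
  obtain ⟨r1, hr1, r2, hr2, hr12⟩ := hR2
  by_cases hc : ∃ r ∈ R, ConnIn G (P \ {r})
  · -- ∃ a non-cut attachment vertex of P
    obtain ⟨r, hrR, hrconn⟩ := hc
    have hrr : ∃ rr ∈ R, rr ≠ r := by
      rcases eq_or_ne r1 r with rfl | h
      · exact ⟨r2, hr2, fun h => hr12 h.symm⟩
      · exact ⟨r1, hr1, h⟩
    obtain ⟨rr, hrrR, hrrne⟩ := hrr
    have hPr_ne : (P \ {r}).Nonempty := ⟨rr, hrrR.1, fun h => hrrne (Set.mem_singleton_iff.mp h)⟩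
    have hrP : r ∈ P := hrR.1
    have hrY : r ∈ Y := hsubP hrP
    obtain ⟨qr, hqr, hradj⟩ := hrR.2
    have hrQ : r ∉ Q := fun h => hd r hrP h
    have hQr_conn : ConnIn G (insert r Q) := connIn_insert hQc hqr hradj hrQ
    have hU2 : (P \ {r}) ∪ insert r Q = Y := by
      rw [← hU]
      ext w
      simp only [Set.mem_union, Set.mem_diff, Set.mem_insert_iff, Set.mem_singleton_iff]
      constructor
      · rintro (⟨h1, _⟩ | (rfl | h1))
        · exact Or.inl h1
        · exact Or.inl hrP
        · exact Or.inr h1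
      · rintro (h1 | h1)
        · rcases eq_or_ne w r with rfl | hne
          · exact Or.inr (Or.inl rfl)
          · exact Or.inl ⟨h1, hne⟩
        · exact Or.inr (Or.inr h1)
    have hd2 : ∀ v, v ∈ P \ {r} → v ∈ insert r Q → False := by
      rintro v ⟨hvP, hvr⟩ (rfl | hvQ)
      · exact hvr rfl
      · exact hd v hvP hvQ
    rcases dichotomy htY htinj hYconn hF hNY hng (P \ {r}) (insert r Q) hU2 hd2
        hPr_ne ⟨r, Set.mem_insert _ _⟩ hrconn hQr_conn with hnew | hnew
    · -- smaller pure-pair partition: contradiction with minimality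
      have hpp : PP (P \ {r}) (insert r Q) :=
        ⟨hU2, hd2, hPr_ne, ⟨r, Set.mem_insert _ _⟩, hrconn, hQr_conn, hnew⟩
      have hle := hminP _ _ hpp
      have hlt : (P \ {r}).ncard < P.ncard :=
        Set.ncard_lt_ncard ⟨Set.diff_subset, fun h => (h hrP).2 rfl⟩ (Set.toFinite _)
      omega
    · -- pure pair avoiding P \ {r}
      obtain ⟨x, y, hxy, hxP', hyP'⟩ := hnew
      have pinned : ∀ m : Fin 3, (∀ q ∈ Q, ¬ G.Adj (t m) q) → (∀ p ∈ P \ {r}, ¬ G.Adj (t m) p) →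
          ∀ w ∈ Y, G.Adj (t m) w → w = r := by
        intro m hmQ hmP w hwY hadj
        rcases (hU ▸ hwY : w ∈ P ∪ Q) with hwP | hwQ
        · by_contra hne
          exact hmP w ⟨hwP, fun h => hne (Set.mem_singleton_iff.mp h)⟩ hadj
        · exact absurd hadj (hmQ w hwQ)
      have hYrne : (Y \ {r}).Nonempty :=
        ⟨rr, hsubP hrrR.1, fun h => hrrne (Set.mem_singleton_iff.mp h)⟩
      -- the final winning construction, abstracted over the role assignment
      have finish : ∀ c o w : Fin 3, c ≠ o → c ≠ w → o ≠ w →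
          (∀ q ∈ Q, ¬ G.Adj (t c) q) → (∀ p ∈ P \ {r}, ¬ G.Adj (t c) p) →
          (∀ p ∈ P \ {r}, ¬ G.Adj (t o) p) → (∀ q ∈ Q, ¬ G.Adj (t w) q) → False := by
        intro c o w hco hcw how hcQ hcP hoP hwQ
        have hcpin := pinned c hcQ hcP
        by_cases hoQ : ∀ q ∈ Q, ¬ G.Adj (t o) q
        · exact pin_contra hF hNY c o hco r hYrne hcpin (pinned o hoQ hoP)
        push_neg at hoQ
        obtain ⟨qo, hqo, hqoadj⟩ := hoQ
        by_cases hwP : ∀ p ∈ P \ {r}, ¬ G.Adj (t w) p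
        · exact pin_contra hF hNY c w hcw r hYrne hcpin (pinned w hwQ hwP)
        push_neg at hwP
        obtain ⟨pw, hpw, hpwadj⟩ := hwP
        have hcr : G.Adj (t c) r := by
          obtain ⟨yc, hyc, hycadj⟩ := attach_all hYconn.1 hF hNY c
          have := hcpin yc hyc hycadj
          rwa [this] at hycadj
        obtain ⟨u0, hu0, v0, hv0, hadj0⟩ :=
          connIn_cross hPc (Set.union_diff_cancel (Set.singleton_subset_iff.mpr hrP))
            ⟨r, Set.mem_singleton r⟩ hPr_ne (fun v hv1 hv2 => hv2.2 hv1)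
        have hadj0' : G.Adj r v0 := (Set.mem_singleton_iff.mp hu0) ▸ hadj0
        obtain ⟨qrr, hqrr, hrradj⟩ := hrrR.2
        apply hng
        refine buildGoal (i := c) (j := w) (k := o) hcw hco (Ne.symm how)
          (Bi := {t c, r}) (Bj := insert (t w) (P \ {r})) (Bk := insert (t o) Q)
          (Or.inl rfl) (Set.mem_insert _ _) (Set.mem_insert _ _)
          ?_ ?_ ?_ (connIn_pair hcr)
          (connIn_insert hrconn hpw hpwadj (fun h => htY w (hsubP h.1)))
          (connIn_insert hQc hqo hqoadj (fun h => htY o (hsubQ h)))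
          ?_ ?_ ?_ ?_ ?_ ?_
        · rintro v (rfl | rfl)
          · exact Or.inr rfl
          · exact Or.inl hrY
        · exact Set.insert_subset_iff.mpr ⟨Or.inr rfl, fun v hv => Or.inl (hsubP hv.1)⟩
        · exact Set.insert_subset_iff.mpr ⟨Or.inr rfl, fun v hv => Or.inl (hsubQ hv)⟩
        · rintro v (rfl | rfl) (h | h)
          · exact hcw (htinj h)
          · exact htY c (hsubP h.1)
          · exact htY w (hrY |> fun _ => h ▸ hrY)
          · exact h.2 rfl
        · rintro v (rfl | rfl) (h | h)
          · exact hco (htinj h)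
          · exact htY c (hsubQ h)
          · exact htY o (h ▸ hrY)
          · exact hrQ h
        · rintro v (rfl | hv) (h | h)
          · exact how (htinj h).symm
          · exact htY w (hsubQ h)
          · exact htY o (hsubP (h ▸ hv).1)
          · exact hd v hv.1 h
        · exact ⟨r, Or.inr rfl, v0, Set.mem_insert_of_mem _ hv0, hadj0'⟩
        · exact ⟨r, Or.inr rfl, qr, Set.mem_insert_of_mem _ hqr, hradj⟩
        · exact ⟨rr, Set.mem_insert_of_mem _ ⟨hrrR.1, fun h => hrrne (Set.mem_singleton_iff.mp h)⟩,
            qrr, Set.mem_insert_of_mem _ hqrr, hrradj⟩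
      -- role assignment case analysis
      rcases fin3_meet x y i j hxy hij with h | h | h | h
      · subst h
        rcases eq_or_ne y j with rfl | hyj
        · exact pin_contra hF hNY x y hxy r hYrne (pinned x hiQ hxP') (pinned y hjQ hyP')
        · exact finish x y j hxy hij hyj hiQ hxP' hyP' hjQ
      · subst h
        rcases eq_or_ne y i with rfl | hyi
        · exact pin_contra hF hNY x y hxy r hYrne (pinned x hjQ hxP') (pinned y hiQ hyP')
        · exact finish x y i hxy (Ne.symm hij) hyi hjQ hxP' hyP' hiQ
      · subst h
        rcases eq_or_ne x j with rfl | hxj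
        · exact pin_contra hF hNY y x (Ne.symm hxy) r hYrne (pinned y hiQ hyP') (pinned x hjQ hxP')
        · exact finish y x j (Ne.symm hxy) hij hxj hiQ hyP' hxP' hjQ
      · subst h
        rcases eq_or_ne x i with rfl | hxi
        · exact pin_contra hF hNY y x (Ne.symm hxy) r hYrne (pinned y hjQ hyP') (pinned x hiQ hxP')
        · exact finish y x i (Ne.symm hxy) (Ne.symm hij) hxi hjQ hyP' hxP' hiQ
  · -- every attachment vertex is a cutvertex of P
    push_neg at hc
    have hP1ne : (P \ {r1}).Nonempty := ⟨r2, hr2.1, fun h => hr12 (Set.mem_singleton_iff.mp h).symm⟩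
    have hKex : {n : ℕ | ∃ r x, r ∈ R ∧ x ∈ P \ {r} ∧
        CompIn G (P \ {r}) x ≠ P \ {r} ∧ (CompIn G (P \ {r}) x).ncard = n}.Nonempty := by
      have hnc := hc r1 hr1
      have hex : ∃ x ∈ P \ {r1}, ∃ y ∈ P \ {r1}, ¬ ReachIn G (P \ {r1}) x y := by
        by_contra hcon; push_neg at hcon
        exact hnc ⟨hP1ne, hcon⟩
      obtain ⟨x, hx, y, hy, hnr⟩ := hex
      refine ⟨_, r1, x, hr1, hx, ?_, rfl⟩
      intro heq
      exact hnr ((heq.symm ▸ hy : y ∈ CompIn G (P \ {r1}) x).2)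
    obtain ⟨r, x, hrR, hxPr, hKproper, hKn⟩ := Nat.sInf_mem hKex
    have hKmin : ∀ n ∈ {n : ℕ | ∃ r x, r ∈ R ∧ x ∈ P \ {r} ∧
        CompIn G (P \ {r}) x ≠ P \ {r} ∧ (CompIn G (P \ {r}) x).ncard = n},
        (CompIn G (P \ {r}) x).ncard ≤ n := by
      intro n hn
      rw [hKn]
      exact Nat.sInf_le hn
    set K := CompIn G (P \ {r}) x with hKdef
    have hKsub : K ⊆ P \ {r} := compIn_subset
    have hKconn : ConnIn G K := connIn_compIn hxPr
    have hKne : K.Nonempty := ⟨x, mem_compIn_self hxPr⟩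
    have hrP : r ∈ P := hrR.1
    have hrY : r ∈ Y := hsubP hrP
    have hrK : r ∉ K := fun h => (hKsub h).2 rfl
    have hPKconn : ConnIn G (P \ K) := connIn_compl_comp hPc hrP hxPr
    have hrPK : r ∈ P \ K := ⟨hrP, hrK⟩
    by_cases hKR : ∃ r' ∈ R, r' ∈ K
    · -- a smaller component exists: contradiction with minimality
      obtain ⟨r', hr'R, hr'K⟩ := hKR
      have hnc' := hc r' hr'R
      have hUsub : P \ K ⊆ P \ {r'} :=
        fun v hv => ⟨hv.1, fun h => hv.2 ((Set.mem_singleton_iff.mp h) ▸ hr'K)⟩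
      have hrr' : r ≠ r' := fun h => hrK (h ▸ hr'K)
      have hrPr' : r ∈ P \ {r'} := ⟨hrP, fun h => hrr' (Set.mem_singleton_iff.mp h)⟩
      have hUW : P \ K ⊆ CompIn G (P \ {r'}) r := by
        intro u hu
        exact ⟨hUsub hu, (hPKconn.2 r hrPK u hu).mono hUsub⟩
      have hzex : ∃ z ∈ P \ {r'}, z ∉ CompIn G (P \ {r'}) r := by
        by_contra hcon; push_neg at hcon
        exact hnc' ⟨⟨r, hrPr'⟩, fun u hu v hv => (hcon u hu).2.symm.trans (hcon v hv).2⟩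
      obtain ⟨z, hzPr', hzW⟩ := hzex
      have hK'sub : CompIn G (P \ {r'}) z ⊆ K \ {r'} := by
        intro v hv
        refine ⟨?_, (compIn_subset hv).2⟩
        by_contra hvK
        exact compIn_disjoint hzPr' hzW v (hUW ⟨(compIn_subset hv).1, hvK⟩) hv
      have hK'proper : CompIn G (P \ {r'}) z ≠ P \ {r'} := by
        intro heq
        exact compIn_disjoint hzPr' hzW r (mem_compIn_self hrPr')
          (heq.symm ▸ hrPr')
      have hlt : (CompIn G (P \ {r'}) z).ncard < K.ncard :=
        lt_of_le_of_lt (Set.ncard_le_ncard hK'sub (Set.toFinite _))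
          (Set.ncard_lt_ncard ⟨Set.diff_subset, fun h => (h hr'K).2 rfl⟩ (Set.toFinite _))
      have := hKmin _ ⟨r', z, hr'R, hzPr', hK'proper, rfl⟩
      omega
    · -- K has no attachment vertex: apply the dichotomy to (K, Y \ K)
      push_neg at hKR
      obtain ⟨qr, hqr, hradj⟩ := hrR.2
      have hYK : Y \ K = (P \ K) ∪ Q := by
        ext w
        simp only [Set.mem_diff, Set.mem_union]
        constructor
        · rintro ⟨hwY, hwK⟩
          rcases (hU ▸ hwY : w ∈ P ∪ Q) with h | h
          · exact Or.inl ⟨h, hwK⟩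
          · exact Or.inr h
        · rintro (⟨h1, h2⟩ | h1)
          · exact ⟨hsubP h1, h2⟩
          · exact ⟨hsubQ h1, fun h => hd w (hKsub h).1 h1⟩
      have hYKconn : ConnIn G (Y \ K) := by
        rw [hYK]
        exact connIn_union_edge hPKconn hQc hrPK hqr hradj
      have hNbhdK : Nbhd G K \ {r} ⊆ {w | ∃ m, w = t m} := by
        rintro w ⟨⟨hwK, u, huK, hadj⟩, hwr⟩
        have huP : u ∈ P := (hKsub huK).1
        rcases hNY u (hsubP huP) w hadj with h1 | hm
        · exfalso
          rcases (hU ▸ h1 : w ∈ P ∪ Q) with hwP | hwQ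
          · exact hwK (compIn_closed huK
              ⟨hwP, fun h => hwr h⟩ hadj)
          · exact hKR u ⟨huP, w, hwQ, hadj⟩ huK
        · exact hm
      have hatt : ∃ a b : Fin 3, a ≠ b ∧ (∃ u ∈ K, G.Adj (t a) u) ∧ (∃ u ∈ K, G.Adj (t b) u) := by
        have hKY : K ⊆ Y := fun v hv => hsubP (hKsub hv).1
        have h3 := hF K hKY hKne
        have hsplit : Nbhd G K ⊆ insert r (Nbhd G K \ {r}) := by
          intro w hw
          rcases eq_or_ne w r with rfl | hne
          · exact Set.mem_insert _ _
          · exact Set.mem_insert_of_mem _ ⟨hw, fun h => hne (Set.mem_singleton_iff.mp h)⟩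
        have h4 := Set.ncard_le_ncard hsplit (Set.toFinite _)
        have h5 := Set.ncard_insert_le r (Nbhd G K \ {r})
        have h6 : 2 ≤ (Nbhd G K \ {r}).ncard := by omega
        obtain ⟨w1, hw1, w2, hw2, hne⟩ := (Set.one_lt_ncard (s := Nbhd G K \ {r}) (Set.toFinite _)).mp (by omega)
        obtain ⟨a, rfl⟩ := hNbhdK hw1
        obtain ⟨b, rfl⟩ := hNbhdK hw2
        refine ⟨a, b, fun h => hne (h ▸ rfl), ?_, ?_⟩
        · obtain ⟨-, u, huK, hadj⟩ := hw1.1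
          exact ⟨u, huK, hadj.symm⟩
        · obtain ⟨-, u, huK, hadj⟩ := hw2.1
          exact ⟨u, huK, hadj.symm⟩
      obtain ⟨a, b, hab, haK, hbK⟩ := hatt
      have hKY : K ⊆ Y := fun v hv => hsubP (hKsub hv).1
      have hUK : K ∪ (Y \ K) = Y := Set.union_diff_cancel hKY
      have hdK : ∀ v, v ∈ K → v ∈ Y \ K → False := fun v h1 h2 => h2.2 h1
      have hYKne : (Y \ K).Nonempty := ⟨r, hrY, hrK⟩
      rcases dichotomy htY htinj hYconn hF hNY hng K (Y \ K) hUK hdK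
          hKne hYKne hKconn hYKconn with hnew | hnew
      · -- PP (K, Y∖K) with K smaller than P : contradiction with minimality
        have hpp : PP K (Y \ K) := ⟨hUK, hdK, hKne, hYKne, hKconn, hYKconn, hnew⟩
        have hle := hminP _ _ hpp
        have hlt : K.ncard < P.ncard :=
          lt_of_le_of_lt (Set.ncard_le_ncard hKsub (Set.toFinite _))
            (Set.ncard_lt_ncard ⟨Set.diff_subset, fun h => (h hrP).2 rfl⟩ (Set.toFinite _))
        omega
      · -- two terminals avoid K entirely: impossible since a and b attach K
        obtain ⟨x', y', hx'y', hx'K, hy'K⟩ := hnew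
        obtain ⟨ua, huaK, hadja⟩ := haK
        obtain ⟨ub, hubK, hadjb⟩ := hbK
        rcases fin3_meet x' y' a b hx'y' hab with h | h | h | h
        · exact hx'K ua huaK (h ▸ hadja)
        · exact hx'K ub hubK (h ▸ hadjb)
        · exact hy'K ua huaK (h ▸ hadja)
        · exact hy'K ub hubK (h ▸ hadjb)

/-- bridge to Mathlib's induced-subgraph connectivity -/
lemma connIn_induce {G : SimpleGraph V} {A : Set V} (h : ConnIn G A) :
    (G.induce A).Connected := by
  rw [SimpleGraph.connected_iff]
  obtain ⟨⟨a, ha⟩, hr⟩ := h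
  have key : ∀ (x y : V), ReachIn G A x y → ∀ (hx : x ∈ A) (hy : y ∈ A),
      (G.induce A).Reachable ⟨x, hx⟩ ⟨y, hy⟩ := by
    intro x y hxy
    induction hxy with
    | refl => intro hx hy; exact SimpleGraph.Reachable.refl _
    | tail hxb hbc ih =>
      intro hx hy
      exact (ih hx hbc.1).trans
        ((show (G.induce A).Adj ⟨_, hbc.1⟩ ⟨_, hy⟩ from hbc.2.2).reachable)
  refine ⟨fun u v => ?_, ⟨⟨a, ha⟩⟩⟩
  obtain ⟨x, hx⟩ := u
  obtain ⟨y, hy⟩ := v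
  exact key x y (hr x hx y hy) hx hy

end Hard

end St12

/-- for a non-degenerate proper separation (Y,S,Z) of order 3 of a
3-connected graph, the torso G⟦Z ∪ S⟧ is a faithful minor of G. -/
theorem statement12 {V : Type*} [Fintype V] (G : SimpleGraph V)
    (h3 : KConnected 3 G) (Y S Z : Set V)
    (hsep : IsSeparation G Y S Z) (hY : Y.Nonempty) (hZ : Z.Nonempty)
    (hord : S.ncard = 3) (hnd : ¬ Degenerate G Y S Z) :
    IsFaithfulMinor G (Z ∪ S) (torso G (Z ∪ S)) := by
  classical
  obtain ⟨hd_YS, hd_YZ, hd_SZ, hcover, hedge⟩ := hsep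
  set X : Set V := Z ∪ S with hXdef
  -- the complement of X is Y
  have hXc : ∀ v : V, v ∉ X ↔ v ∈ Y := by
    intro v
    constructor
    · intro hv
      have : v ∈ Y ∪ S ∪ Z := hcover ▸ Set.mem_univ v
      rcases this with (h | h) | h
      · exact h
      · exact absurd (Or.inr h) hv
      · exact absurd (Or.inl h) hv
    · intro hv hvX
      rcases hvX with h | h
      · exact Set.disjoint_left.mp hd_YZ hv h
      · exact Set.disjoint_left.mp hd_YS hv h
  -- the separation-based connectivity bound
  have hF : ∀ A, A ⊆ Y → A.Nonempty → 3 ≤ (Nbhd G A).ncard := by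
    intro A hAY hAne
    have hZdisj : ∀ z ∈ Z, z ∉ A ∪ Nbhd G A := by
      intro z hz hmem
      rcases hmem with h | h
      · exact Set.disjoint_left.mp hd_YZ (hAY h) hz
      · obtain ⟨-, u, hu, hadj⟩ := h
        exact hedge u (hAY hu) z hz hadj
    have hsep' : IsSeparation G A (Nbhd G A) (A ∪ Nbhd G A)ᶜ := by
      refine ⟨Set.disjoint_left.mpr (fun v hv hn => hn.1 hv),
        Set.disjoint_left.mpr (fun v hv hc => hc (Or.inl hv)),
        Set.disjoint_left.mpr (fun v hv hc => hc (Or.inr hv)),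
        ?_, ?_⟩
      · exact Set.union_compl_self _
      · intro y hy z hz hadj
        exact hz (Or.inr ⟨fun h => hz (Or.inl h), y, hy, hadj⟩)
    obtain ⟨z0, hz0⟩ := hZ
    exact h3.2 A (Nbhd G A) _ hsep' hAne ⟨z0, hZdisj z0 hz0⟩
  -- the three terminals
  obtain ⟨a, b, c, hab, hac, hbc, hS⟩ := Set.ncard_eq_three.mp hord
  set t : Fin 3 → V := ![a, b, c] with htdef
  have ht0 : t 0 = a := rfl
  have ht1 : t 1 = b := rfl
  have ht2 : t 2 = c := rfl
  have htinj : Function.Injective t := by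
    intro i j hij
    fin_cases i <;> fin_cases j <;>
      first
        | rfl
        | (exfalso; rw [htdef] at hij; simp at hij; simp_all)
  have htS : ∀ i, t i ∈ S := by
    intro i
    fin_cases i <;> rw [hS] <;> simp [htdef]
  have hSt : ∀ v ∈ S, ∃ m, v = t m := by
    intro v hv
    rw [hS] at hv
    rcases hv with h | h | h
    · exact ⟨0, h⟩
    · exact ⟨1, h⟩
    · exact ⟨2, h⟩
  have htY : ∀ i, t i ∉ Y := fun i h => Set.disjoint_left.mp hd_YS h (htS i)
  have htZ : ∀ i, t i ∉ Z := fun i h => Set.disjoint_left.mp hd_SZ (htS i) h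
  have hNY : ∀ y ∈ Y, ∀ v, G.Adj y v → v ∈ Y ∨ ∃ m, v = t m := by
    intro y hy v hadj
    have : v ∈ Y ∪ S ∪ Z := hcover ▸ Set.mem_univ v
    rcases this with (h | h) | h
    · exact Or.inl h
    · exact Or.inr (hSt v h)
    · exact absurd hadj (hedge y hy v h)
  -- neighbourhoods of closed connected subsets of Y are all of S
  have hNbhdComp : ∀ C, C ⊆ Y → C.Nonempty → (∀ u ∈ C, ∀ w ∈ Y, G.Adj u w → w ∈ C) →
      Nbhd G C = S := by
    intro C hCY hCne hclosed
    have hsub : Nbhd G C ⊆ S := by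
      rintro v ⟨hvC, u, hu, hadj⟩
      rcases hNY u (hCY hu) v hadj with h | ⟨m, rfl⟩
      · exact absurd (hclosed u hu v h hadj) hvC
      · exact htS m
    have hcard : S.ncard ≤ (Nbhd G C).ncard := hord ▸ hF C hCY hCne
    exact Set.eq_of_subset_of_ncard_le hsub hcard (Set.toFinite _)
  -- main case analysis to obtain the branch sets
  have goal : St12.GoalProp G Y t := by
    by_cases hconn : St12.ConnIn G Y
    · rcases lt_or_ge Y.ncard 2 with hlt | hge
      · -- |Y| = 1 : there must be an edge inside S
        have h1 : Y.ncard = 1 := by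
          have := (Set.ncard_pos (Set.toFinite Y)).mpr hY
          omega
        obtain ⟨y0, hy0⟩ := Set.ncard_eq_one.mp h1
        have hedgeS : ∃ u ∈ S, ∃ v ∈ S, G.Adj u v := by
          by_contra hcon; push_neg at hcon
          exact hnd ⟨h1, hcon⟩
        obtain ⟨u, hu, v, hv, huv⟩ := hedgeS
        obtain ⟨i, rfl⟩ := hSt u hu
        obtain ⟨j, rfl⟩ := hSt v hv
        have hij : i ≠ j := fun h => (G.ne_of_adj huv) (h ▸ rfl)
        obtain ⟨k, hik, hjk⟩ := St12.fin3_third i j hij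
        have hNbhdY : Nbhd G Y = S := hNbhdComp Y subset_rfl hY (fun u hu w hw _ => hw)
        have hattach : ∀ m : Fin 3, ∃ u ∈ Y, G.Adj u (t m) := by
          intro m
          have : t m ∈ Nbhd G Y := hNbhdY ▸ htS m
          obtain ⟨-, u, hu, hadj⟩ := this
          exact ⟨u, hu, hadj⟩
        obtain ⟨ui, hui, huiadj⟩ := hattach i
        obtain ⟨uj, huj, hujadj⟩ := hattach j
        have hYconnIn : St12.ConnIn G Y := hconn
        apply St12.buildGoal hij hik hjk (Bi := {t i}) (Bj := {t j}) (Bk := insert (t k) Y)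
          rfl rfl (Set.mem_insert _ _)
          (fun w hw => Or.inr hw) (fun w hw => Or.inr hw)
          (Set.insert_subset_iff.mpr ⟨Or.inr rfl, fun w hw => Or.inl hw⟩)
          St12.connIn_singleton St12.connIn_singleton
          ?_ ?_ ?_ ?_ ?_ ?_ ?_
        · obtain ⟨uk, huk, hukadj⟩ := hattach k
          exact St12.connIn_insert hYconnIn huk hukadj.symm (htY k)
        · rintro w rfl h
          exact hij (htinj h)
        · rintro w rfl (h | h)
          · exact hik (htinj h)
          · exact htY i h
        · rintro w rfl (h | h)
          · exact hjk (htinj h)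
          · exact htY j h
        · exact ⟨t i, rfl, t j, rfl, huv⟩
        · exact ⟨t i, rfl, ui, Set.mem_insert_of_mem _ hui, huiadj.symm⟩
        · exact ⟨t j, rfl, uj, Set.mem_insert_of_mem _ huj, hujadj.symm⟩
      · exact St12.hardCase htY htinj hconn hge hF hNY
    · -- Y disconnected: two components
      have hex : ∃ x ∈ Y, ∃ y ∈ Y, ¬ St12.ReachIn G Y x y := by
        by_contra hcon; push_neg at hcon
        exact hconn ⟨hY, hcon⟩
      obtain ⟨x, hx, y, hy, hnr⟩ := hex
      set C1 := St12.CompIn G Y x with hC1def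
      set C2 := St12.CompIn G Y y with hC2def
      have hyC1 : y ∉ C1 := fun h => hnr h.2
      have hdisj : ∀ v, v ∈ C1 → v ∈ C2 → False := St12.compIn_disjoint hy hyC1
      have hC1Y : C1 ⊆ Y := St12.compIn_subset
      have hC2Y : C2 ⊆ Y := St12.compIn_subset
      have hN1 : Nbhd G C1 = S :=
        hNbhdComp C1 hC1Y ⟨x, St12.mem_compIn_self hx⟩
          (fun u hu w hw hadj => St12.compIn_closed hu hw hadj)
      have hN2 : Nbhd G C2 = S :=
        hNbhdComp C2 hC2Y ⟨y, St12.mem_compIn_self hy⟩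
          (fun u hu w hw hadj => St12.compIn_closed hu hw hadj)
      have hatt1 : ∀ m : Fin 3, ∃ u ∈ C1, G.Adj u (t m) := by
        intro m
        have : t m ∈ Nbhd G C1 := hN1 ▸ htS m
        obtain ⟨-, u, hu, hadj⟩ := this
        exact ⟨u, hu, hadj⟩
      have hatt2 : ∀ m : Fin 3, ∃ u ∈ C2, G.Adj u (t m) := by
        intro m
        have : t m ∈ Nbhd G C2 := hN2 ▸ htS m
        obtain ⟨-, u, hu, hadj⟩ := this
        exact ⟨u, hu, hadj⟩
      obtain ⟨u01, hu01, hu01adj⟩ := hatt2 0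
      obtain ⟨u02, hu02, hu02adj⟩ := hatt1 2
      obtain ⟨u12, hu12, hu12adj⟩ := hatt2 2
      obtain ⟨w0, hw0, hw0adj⟩ := hatt1 0
      obtain ⟨w1, hw1, hw1adj⟩ := hatt2 1
      apply St12.buildGoal (i := 0) (j := 1) (k := 2) (by decide) (by decide) (by decide)
        (Bi := insert (t 0) C1) (Bj := insert (t 1) C2) (Bk := {t 2})
        (Set.mem_insert _ _) (Set.mem_insert _ _) rfl
        (Set.insert_subset_iff.mpr ⟨Or.inr rfl, fun w hw => Or.inl (hC1Y hw)⟩)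
        (Set.insert_subset_iff.mpr ⟨Or.inr rfl, fun w hw => Or.inl (hC2Y hw)⟩)
        (fun w hw => Or.inr hw)
        (St12.connIn_insert (St12.connIn_compIn hx) hw0 hw0adj.symm
          (fun h => htY 0 (hC1Y h)))
        (St12.connIn_insert (St12.connIn_compIn hy) hw1 hw1adj.symm
          (fun h => htY 1 (hC2Y h)))
        St12.connIn_singleton
        ?_ ?_ ?_ ?_ ?_ ?_
      · rintro w (h0 | hw) (h | h)
        · exact absurd (htinj (h0.symm.trans h)) (by decide)
        · exact htY 0 (hC2Y (by rwa [h0] at h))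
        · exact htY 1 (hC1Y (by rwa [h] at hw))
        · exact hdisj w hw h
      · rintro w (h0 | hw) h
        · exact absurd (htinj (h0.symm.trans h)) (by decide)
        · exact htY 2 (hC1Y (by rwa [h] at hw))
      · rintro w (h0 | hw) h
        · exact absurd (htinj (h0.symm.trans h)) (by decide)
        · exact htY 2 (hC2Y (by rwa [h] at hw))
      · exact ⟨t 0, Set.mem_insert _ _, u01, Set.mem_insert_of_mem _ hu01, hu01adj.symm⟩
      · exact ⟨u02, Set.mem_insert_of_mem _ hu02, t 2, rfl, hu02adj⟩
      · exact ⟨u12, Set.mem_insert_of_mem _ hu12, t 2, rfl, hu12adj⟩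
  -- build the faithful model from the branch sets
  obtain ⟨B, hBmem, hBsub, hBconn, hBdisj, hBedge⟩ := goal
  have hBZ : ∀ m, ∀ v ∈ B m, v ∉ Z := by
    intro m v hv hvZ
    rcases hBsub m hv with h | h
    · exact Set.disjoint_left.mp hd_YZ h hvZ
    · exact htZ m ((Set.mem_singleton_iff.mp h) ▸ hvZ)
  set M : X → Set V := fun w =>
    if (w : V) = t 0 then B 0 else if (w : V) = t 1 then B 1
      else if (w : V) = t 2 then B 2 else {(w : V)} with hMdef
  have hM : ∀ w : X, (∃ m, (w : V) = t m ∧ M w = B m) ∨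
      ((∀ m, (w : V) ≠ t m) ∧ M w = {(w : V)}) := by
    intro w
    by_cases h0 : (w : V) = t 0
    · exact Or.inl ⟨0, h0, by rw [hMdef]; simp only [if_pos h0]⟩
    by_cases h1 : (w : V) = t 1
    · exact Or.inl ⟨1, h1, by rw [hMdef]; simp only [if_neg h0, if_pos h1]⟩
    by_cases h2 : (w : V) = t 2
    · exact Or.inl ⟨2, h2, by rw [hMdef]; simp only [if_neg h0, if_neg h1, if_pos h2]⟩
    refine Or.inr ⟨?_, by rw [hMdef]; simp only [if_neg h0, if_neg h1, if_neg h2]⟩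
    intro m
    fin_cases m
    · exact h0
    · exact h1
    · exact h2
  have hMB : ∀ (w : X) (m : Fin 3), (w : V) = t m → M w = B m := by
    intro w m hw
    rcases hM w with ⟨m', hm', hMw⟩ | ⟨hne, _⟩
    · have : m' = m := htinj (hm'.symm.trans hw)
      exact this ▸ hMw
    · exact absurd hw (hne m)
  have hMmem : ∀ w : X, (w : V) ∈ M w := by
    intro w
    rcases hM w with ⟨m, hm, hMw⟩ | ⟨-, hMw⟩
    · rw [hMw, hm]; exact hBmem m
    · rw [hMw]; exact rfl
  refine ⟨M, hMmem, ?_, ?_, ?_⟩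
  · intro w
    rcases hM w with ⟨m, -, hMw⟩ | ⟨-, hMw⟩
    · rw [hMw]; exact St12.connIn_induce (hBconn m)
    · rw [hMw]; exact St12.connIn_induce St12.connIn_singleton
  · intro w w' hne
    rw [Set.disjoint_left]
    intro v hv hv'
    have hcne : (w : V) ≠ (w' : V) := fun h => hne (Subtype.ext h)
    rcases hM w with ⟨m, hm, hMw⟩ | ⟨hnem, hMw⟩ <;>
      rcases hM w' with ⟨m', hm', hMw'⟩ | ⟨hnem', hMw'⟩
    · have hmm' : m ≠ m' := fun h => hcne (by rw [hm, hm', h])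
      exact hBdisj m m' hmm' v (hMw ▸ hv) (hMw' ▸ hv')
    · -- v ∈ B m and v = ↑w'
      have hvw' : v = (w' : V) := Set.mem_singleton_iff.mp (hMw' ▸ hv')
      have hw'X : (w' : V) ∈ X := w'.2
      rcases hw'X with h | h
      · exact hBZ m v (hMw ▸ hv) (hvw' ▸ h)
      · obtain ⟨m', hm'⟩ := hSt _ h
        exact hnem' m' hm'
    · have hvw : v = (w : V) := Set.mem_singleton_iff.mp (hMw ▸ hv)
      have hwX : (w : V) ∈ X := w.2
      rcases hwX with h | h
      · exact hBZ m' v (hMw' ▸ hv') (hvw ▸ h)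
      · obtain ⟨m, hm⟩ := hSt _ h
        exact hnem m hm
    · have hvw : v = (w : V) := Set.mem_singleton_iff.mp (hMw ▸ hv)
      have hvw' : v = (w' : V) := Set.mem_singleton_iff.mp (hMw' ▸ hv')
      exact hcne (hvw ▸ hvw')
  · rintro w w' ⟨hne, hadj | ⟨C, hC, hwC, hw'C⟩⟩
    · exact ⟨(w : V), hMmem w, (w' : V), hMmem w', hadj⟩
    · -- torso edge via an outside component: both ends lie in S
      have hCY : C ⊆ Y := fun v hv => (hXc v).mp (hC.1 hv)
      have hCne : C.Nonempty := Set.nonempty_coe_sort.mp hC.2.1.nonempty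
      have hNbhdC : Nbhd G C = S :=
        hNbhdComp C hCY hCne
          (fun u hu v hv hadj => hC.2.2 u hu v ((hXc v).mpr hv) hadj)
      have hwS : (w : V) ∈ S := hNbhdC ▸ hwC
      have hw'S : (w' : V) ∈ S := hNbhdC ▸ hw'C
      obtain ⟨m, hm⟩ := hSt _ hwS
      obtain ⟨m', hm'⟩ := hSt _ hw'S
      have hmm' : m ≠ m' := by
        intro h
        exact (fun hh => hne (Subtype.ext hh) : (w : V) ≠ (w' : V)) (by rw [hm, hm', h])
      obtain ⟨u, hu, v, hv, huv⟩ := hBedge m m' hmm'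
      exact ⟨u, (hMB w m hm) ▸ hu, v, (hMB w' m' hm') ▸ hv, huv⟩
end

section
/- Let G be a 3-connected finite simple graph and (Y,S,Z) a proper separation of G of order at most 3 with |Y| = 1 and S an independent set of G (i.e., a degenerate separation). Then the torso G⟦Z ∪ S⟧ is not a minor of G. -/
variable {V : Type*} {W : Type*}

section Aux

open Classical in
/-- Extend a model `M : X → Set V` to all of `V` by the empty set. -/
noncomputable def auxExt {V : Type*} (X : Set V) (M : X → Set V) : V → Set V :=
  fun u => if h : u ∈ X then M ⟨u, h⟩ else ∅

/-- Projection property relating an `H`-edge to a chosen `G`-edge. -/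
def auxP {V : Type*} (G : SimpleGraph V) (M' : V → Set V) (e e' : Sym2 V) : Prop :=
  ∃ u v a b : V, e = s(u, v) ∧ e' = s(a, b) ∧ u ≠ v ∧ G.Adj a b ∧ a ∈ M' u ∧ b ∈ M' v

open Classical in
noncomputable def auxPsi {V : Type*} (G : SimpleGraph V) (M' : V → Set V) :
    Sym2 V → Sym2 V :=
  fun e => if h : ∃ e', auxP G M' e e' then h.choose else e

lemma auxPsi_spec {V : Type*} (G : SimpleGraph V) (M' : V → Set V) (e : Sym2 V)
    (h : ∃ e', auxP G M' e e') : auxP G M' e (auxPsi G M' e) := by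
  rw [auxPsi, dif_pos h]
  exact h.choose_spec

open Classical in
noncomputable def auxA {V : Type*} (y : V) (g : V → V) : Sym2 V → Sym2 V :=
  fun e => if h : y ∈ e then s(Sym2.Mem.other h, g (Sym2.Mem.other h)) else e

lemma auxA_pos {V : Type*} (y : V) (g : V → V) (e : Sym2 V) (h : y ∈ e) :
    ∃ t, s(y, t) = e ∧ auxA y g e = s(t, g t) :=
  ⟨Sym2.Mem.other h, Sym2.other_spec h, dif_pos h⟩

lemma auxA_neg {V : Type*} (y : V) (g : V → V) (e : Sym2 V) (h : y ∉ e) :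
    auxA y g e = e := dif_neg h

lemma aux_tripleinj {α : Type*} {s1 s2 s3 : α} (h12 : s1 ≠ s2) (h13 : s1 ≠ s3)
    (h23 : s2 ≠ s3) (g : α → α) (hg1 : g s1 = s2) (hg2 : g s2 = s3) (hg3 : g s3 = s1) :
    ∀ t1 ∈ ({s1, s2, s3} : Set α), ∀ t2 ∈ ({s1, s2, s3} : Set α),
      s(t1, g t1) = s(t2, g t2) → t1 = t2 := by
  intro t1 ht1 t2 ht2 h
  simp only [Set.mem_insert_iff, Set.mem_singleton_iff] at ht1 ht2
  rcases ht1 with rfl | rfl | rfl <;> rcases ht2 with rfl | rfl | rfl <;>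
    simp only [hg1, hg2, hg3, Sym2.eq_iff] at h ⊢ <;> tauto

lemma exists_adj_of_walk {α : Type*} {G : SimpleGraph α} {x y : α}
    (q : G.Walk x y) (h : x ≠ y) : ∃ z, G.Adj x z := by
  cases q with
  | nil => exact absurd rfl h
  | cons h' _ => exact ⟨_, h'⟩

end Aux

/-- for a degenerate proper separation (Y,S,Z) of order at most 3 of a
3-connected graph, the torso G⟦Z ∪ S⟧ is not a minor of G. -/
theorem statement13 {V : Type*} [Fintype V] (G : SimpleGraph V)
    (h3 : KConnected 3 G) (Y S Z : Set V)
    (hsep : IsSeparation G Y S Z) (hY : Y.Nonempty) (hZ : Z.Nonempty)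
    (hord : S.ncard ≤ 3) (hdeg : Degenerate G Y S Z) :
    ¬ IsMinor (torso G (Z ∪ S)) G := by
  classical
  obtain ⟨hY1, hind⟩ := hdeg
  obtain ⟨y, rfl⟩ := Set.ncard_eq_one.mp hY1
  obtain ⟨hYS, hYZ, hSZ, huniv, hYZadj⟩ := hsep
  set X : Set V := Z ∪ S with hXdef
  rintro ⟨M, hconn, hdisj, hedge⟩
  have hyS : y ∉ S := fun h => Set.disjoint_left.mp hYS rfl h
  have hyZ : y ∉ Z := fun h => Set.disjoint_left.mp hYZ rfl h
  have hyX : y ∉ X := fun h => h.elim hyZ hyS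
  have hmemX : ∀ v : V, v ≠ y → v ∈ X := by
    intro v hv
    have hv' : v ∈ ({y} : Set V) ∪ S ∪ Z := by rw [huniv]; trivial
    rcases hv' with (hv' | hv') | hv'
    · exact absurd hv' hv
    · exact Or.inr hv'
    · exact Or.inl hv'
  have hXne : ∀ v ∈ X, v ≠ y := by
    rintro v hv rfl; exact hyX hv
  -- neighbours of y are exactly S
  have hNS : ∀ t, G.Adj y t → t ∈ S := by
    intro t ht
    rcases hmemX t ht.ne' with h | h
    · exact absurd ht (hYZadj y rfl t h)
    · exact h
  have hVcard : 3 < Nat.card V := h3.1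
  set T : Set V := {t | G.Adj y t} with hTdef
  have hTS : T ⊆ S := fun t ht => hNS t ht
  have hT3 : 3 ≤ T.ncard := by
    by_cases hR : (({y} : Set V) ∪ T)ᶜ.Nonempty
    · refine h3.2 {y} T (({y} ∪ T)ᶜ) ⟨?_, ?_, ?_, ?_, ?_⟩ ⟨y, rfl⟩ hR
      · exact Set.disjoint_left.mpr (by rintro a rfl h; exact G.irrefl h)
      · exact Set.disjoint_left.mpr (by rintro a rfl h; exact h (Or.inl rfl))
      · exact Set.disjoint_left.mpr (fun a ha h => h (Or.inr ha))
      · exact Set.union_compl_self _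
      · rintro a rfl z hz hadj
        exact hz (Or.inr hadj)
    · rw [Set.not_nonempty_iff_eq_empty, Set.compl_empty_iff] at hR
      have h1 : Nat.card V = (({y} : Set V) ∪ T).ncard := by
        rw [hR, Set.ncard_univ]
      have h2 : (({y} : Set V) ∪ T).ncard ≤ 1 + T.ncard := by
        simpa using Set.ncard_union_le ({y} : Set V) T
      omega
  have hTSeq : T = S := Set.eq_of_subset_of_ncard_le hTS (hord.trans hT3) (Set.toFinite S)
  have hS3 : S.ncard = 3 := le_antisymm hord (by rw [← hTSeq]; exact hT3)
  have hadjS : ∀ s ∈ S, G.Adj y s := by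
    intro s hs; rw [← hTSeq] at hs; exact hs
  obtain ⟨s1, s2, s3, h12, h13, h23, hSeq⟩ := Set.ncard_eq_three.mp hS3
  -- {y} is a component outside X
  have hcomp : IsCompOutside G X ({y} : Set V) := by
    refine ⟨?_, ?_, ?_⟩
    · rintro a rfl; exact hyX
    · rw [SimpleGraph.connected_iff]
      refine ⟨fun a b => ?_, ⟨⟨y, rfl⟩⟩⟩
      have hab : a = b := Subtype.ext (a.2.trans b.2.symm)
      rw [hab]
    · rintro u rfl v hvX hadj
      by_contra hvy
      exact hvX (hmemX v hvy)
  have hSX : S ⊆ X := Set.subset_union_right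
  have hNbhd : ∀ a ∈ S, a ∈ Nbhd G ({y} : Set V) := by
    intro a ha
    refine ⟨?_, y, rfl, hadjS a ha⟩
    rintro rfl; exact hyS ha
  set H := torso G X with hHdef
  have htadj : ∀ (a : V) (ha : a ∈ S) (b : V) (hb : b ∈ S), a ≠ b →
      H.Adj ⟨a, hSX ha⟩ ⟨b, hSX hb⟩ := by
    intro a ha b hb hab
    exact ⟨fun h => hab (congrArg Subtype.val h),
      Or.inr ⟨{y}, hcomp, hNbhd a ha, hNbhd b hb⟩⟩
  set F : Finset (Sym2 V) := H.edgeFinset.image (Sym2.map Subtype.val) with hFdef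
  have hFmem : ∀ e ∈ F, ∃ (u v : V) (hu : u ∈ X) (hv : v ∈ X),
      u ≠ v ∧ e = s(u, v) ∧ H.Adj ⟨u, hu⟩ ⟨v, hv⟩ := by
    intro e he
    obtain ⟨e0, he0, rfl⟩ := Finset.mem_image.mp he
    induction e0 using Sym2.ind with
    | _ w w' =>
      rw [SimpleGraph.mem_edgeFinset, SimpleGraph.mem_edgeSet] at he0
      refine ⟨↑w, ↑w', w.2, w'.2, ?_, rfl, he0⟩
      intro h
      exact H.irrefl (Subtype.ext h ▸ he0)
  have hFmem' : ∀ (u v : V) (hu : u ∈ X) (hv : v ∈ X),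
      H.Adj ⟨u, hu⟩ ⟨v, hv⟩ → s(u, v) ∈ F := by
    intro u v hu hv h
    exact Finset.mem_image.mpr ⟨s(⟨u, hu⟩, ⟨v, hv⟩), SimpleGraph.mem_edgeFinset.mpr h, rfl⟩
  -- the injection α from E(G) into F
  set g : V → V := fun t => if t = s1 then s2 else if t = s2 then s3 else s1 with hgdef
  have hg1 : g s1 = s2 := if_pos rfl
  have hg2 : g s2 = s3 := by rw [hgdef]; simp [h12.symm]
  have hg3 : g s3 = s1 := by rw [hgdef]; simp [h13.symm, h23.symm]
  have hgS : ∀ t ∈ S, g t ∈ S ∧ t ≠ g t := by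
    intro t ht
    rw [hSeq] at ht ⊢
    rcases ht with rfl | rfl | rfl
    · rw [hg1]; exact ⟨Or.inr (Or.inl rfl), h12⟩
    · rw [hg2]; exact ⟨Or.inr (Or.inr rfl), h23⟩
    · rw [hg3]; exact ⟨Or.inl rfl, Ne.symm h13⟩
  have hginj : ∀ t1 ∈ S, ∀ t2 ∈ S, s(t1, g t1) = s(t2, g t2) → t1 = t2 := by
    rw [hSeq]
    exact aux_tripleinj h12 h13 h23 g hg1 hg2 hg3
  have hAmem : ∀ e ∈ G.edgeFinset, auxA y g e ∈ F := by
    intro e he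
    rw [SimpleGraph.mem_edgeFinset] at he
    by_cases h : y ∈ e
    · obtain ⟨t, hspec, hval⟩ := auxA_pos y g e h
      have hadjyt : G.Adj y t := by
        rw [← SimpleGraph.mem_edgeSet, hspec]; exact he
      have htS : t ∈ S := hNS t hadjyt
      obtain ⟨hgtS, htne⟩ := hgS t htS
      rw [hval]
      exact hFmem' t (g t) (hSX htS) (hSX hgtS) (htadj t htS (g t) hgtS htne)
    · rw [auxA_neg y g e h]
      induction e using Sym2.ind with
      | _ u v =>
        rw [SimpleGraph.mem_edgeSet] at he
        rw [Sym2.mem_iff] at h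
        push_neg at h
        have hu : u ∈ X := hmemX u (fun huy => h.1 huy.symm)
        have hv : v ∈ X := hmemX v (fun hvy => h.2 hvy.symm)
        refine hFmem' u v hu hv ⟨fun hh => he.ne (congrArg Subtype.val hh), Or.inl he⟩
  have hAnotedge : ∀ e ∈ G.edgeFinset, ∀ h : y ∈ e, auxA y g e ∉ G.edgeSet := by
    intro e he h
    rw [SimpleGraph.mem_edgeFinset] at he
    obtain ⟨t, hspec, hval⟩ := auxA_pos y g e h
    have hadjyt : G.Adj y t := by
      rw [← SimpleGraph.mem_edgeSet, hspec]; exact he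
    have htS : t ∈ S := hNS t hadjyt
    obtain ⟨hgtS, _⟩ := hgS t htS
    rw [hval, SimpleGraph.mem_edgeSet]
    exact hind t htS (g t) hgtS
  have hAinj : Set.InjOn (auxA y g) G.edgeFinset := by
    intro e1 he1 e2 he2 heq
    by_cases h1 : y ∈ e1 <;> by_cases h2 : y ∈ e2
    · obtain ⟨t1, hs1, hv1⟩ := auxA_pos y g e1 h1
      obtain ⟨t2, hs2, hv2⟩ := auxA_pos y g e2 h2
      have ht1 : t1 ∈ S := hNS t1 (by
        rw [← SimpleGraph.mem_edgeSet, hs1]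
        exact SimpleGraph.mem_edgeFinset.mp he1)
      have ht2 : t2 ∈ S := hNS t2 (by
        rw [← SimpleGraph.mem_edgeSet, hs2]
        exact SimpleGraph.mem_edgeFinset.mp he2)
      have : t1 = t2 := hginj t1 ht1 t2 ht2 (by rw [← hv1, ← hv2, heq])
      rw [← hs1, ← hs2, this]
    · exfalso
      apply hAnotedge e1 he1 h1
      rw [heq, auxA_neg y g e2 h2]
      exact SimpleGraph.mem_edgeFinset.mp he2
    · exfalso
      apply hAnotedge e2 he2 h2
      rw [← heq, auxA_neg y g e1 h1]
      exact SimpleGraph.mem_edgeFinset.mp he1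
    · rw [auxA_neg y g e1 h1, auxA_neg y g e2 h2] at heq
      exact heq
  have hcard1 : G.edgeFinset.card ≤ F.card :=
    Finset.card_le_card_of_injOn (auxA y g) hAmem hAinj
  -- the map ψ from F back into E(G)
  set M' : V → Set V := auxExt X M with hM'def
  have hM'pos : ∀ (u : V) (h : u ∈ X), M' u = M ⟨u, h⟩ := fun u h => dif_pos h
  have hM'mem : ∀ (u a : V), a ∈ M' u → ∃ h : u ∈ X, a ∈ M ⟨u, h⟩ := by
    intro u a ha
    by_cases h : u ∈ X
    · exact ⟨h, by rwa [hM'pos u h] at ha⟩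
    · rw [hM'def] at ha
      unfold auxExt at ha
      rw [dif_neg h] at ha
      exact absurd ha (Set.notMem_empty a)
  have hM'uniq : ∀ (u1 u2 a : V), a ∈ M' u1 → a ∈ M' u2 → u1 = u2 := by
    intro u1 u2 a h1 h2
    obtain ⟨hu1, hm1⟩ := hM'mem u1 a h1
    obtain ⟨hu2, hm2⟩ := hM'mem u2 a h2
    by_contra hne
    have hne' : (⟨u1, hu1⟩ : X) ≠ ⟨u2, hu2⟩ := fun h => hne (congrArg Subtype.val h)
    exact Set.disjoint_left.mp (hdisj hne') hm1 hm2
  have hψ : ∀ e ∈ F, auxP G M' e (auxPsi G M' e) := by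
    intro e he
    obtain ⟨u, v, hu, hv, hne, rfl, hadj⟩ := hFmem e he
    obtain ⟨a, ha, b, hb, hab⟩ := hedge ⟨u, hu⟩ ⟨v, hv⟩ hadj
    exact auxPsi_spec G M' _ ⟨s(a, b), u, v, a, b, rfl, rfl, hne, hab,
      by rw [hM'pos u hu]; exact ha, by rw [hM'pos v hv]; exact hb⟩
  have hψE : ∀ e ∈ F, auxPsi G M' e ∈ G.edgeFinset := by
    intro e he
    obtain ⟨u, v, a, b, _, hval, _, hab, _, _⟩ := hψ e he
    rw [SimpleGraph.mem_edgeFinset, hval, SimpleGraph.mem_edgeSet]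
    exact hab
  have hψinj : Set.InjOn (auxPsi G M') F := by
    intro e1 he1 e2 he2 heq
    obtain ⟨u1, v1, a1, b1, he1', hv1, hne1, _, ha1, hb1⟩ := hψ e1 he1
    obtain ⟨u2, v2, a2, b2, he2', hv2, hne2, _, ha2, hb2⟩ := hψ e2 he2
    rw [hv1, hv2, Sym2.eq_iff] at heq
    rcases heq with ⟨rfl, rfl⟩ | ⟨rfl, rfl⟩
    · rw [he1', he2', hM'uniq u1 u2 a1 ha1 ha2, hM'uniq v1 v2 b1 hb1 hb2]
    · rw [he1', he2', hM'uniq u1 v2 a1 ha1 hb2, hM'uniq v1 u2 b1 hb1 ha2, Sym2.eq_swap]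
  have key : ∀ m ∈ G.edgeFinset, (∀ e ∈ F, auxPsi G M' e ≠ m) → False := by
    intro m hm hmiss
    have h2 : F.card ≤ (G.edgeFinset.erase m).card :=
      Finset.card_le_card_of_injOn (auxPsi G M')
        (fun e he => Finset.mem_erase.mpr ⟨hmiss e he, hψE e he⟩) hψinj
    rw [Finset.card_erase_of_mem hm] at h2
    have hm1 : 1 ≤ G.edgeFinset.card := Finset.card_pos.mpr ⟨m, hm⟩
    omega
  -- dichotomy on branch set sizes
  by_cases hsing : ∀ w : X, ∀ a ∈ M w, ∀ b ∈ M w, a = b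
  · -- all branch sets are singletons; some vertex is missed
    have hMne : ∀ w : X, (M w).Nonempty := fun w =>
      Set.nonempty_coe_sort.mp (hconn w).nonempty
    have hf : ∀ w : X, (hMne w).choose ∈ M w := fun w => (hMne w).choose_spec
    have hnotsurj : ∃ v : V, ∀ w : X, (hMne w).choose ≠ v := by
      by_contra hno
      push_neg at hno
      have hs : Function.Surjective (fun w : X => (hMne w).choose) := by
        intro v
        obtain ⟨w, hw⟩ := hno v
        exact ⟨w, hw⟩
      have h1 : Nat.card V ≤ Nat.card X := Nat.card_le_card_of_surjective _ hs
      have h2 : Nat.card X = X.ncard := Nat.card_coe_set_eq X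
      have h3 : X.ncard < Nat.card V := by
        rw [← Set.ncard_univ V]
        exact Set.ncard_lt_ncard
          (Set.ssubset_univ_iff.mpr (fun h => hyX (h ▸ Set.mem_univ y)))
          (Set.toFinite _)
      omega
    obtain ⟨v, hv⟩ := hnotsurj
    have hvM : ∀ u : V, v ∉ M' u := by
      intro u hmem
      obtain ⟨hu, hm⟩ := hM'mem u v hmem
      exact hv ⟨u, hu⟩ (hsing ⟨u, hu⟩ _ (hf ⟨u, hu⟩) v hm)
    have hvadj : ∃ u0, G.Adj v u0 := by
      by_contra hno
      push_neg at hno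
      have hnt : Nontrivial V := by
        have : 1 < Nat.card V := by omega
        exact Finite.one_lt_card_iff_nontrivial.mp this
      obtain ⟨u, hu⟩ := exists_ne v
      have hsep' : IsSeparation G {v} ∅ ({v}ᶜ) := by
        refine ⟨Set.disjoint_empty _, Set.disjoint_compl_right_iff_subset.mpr
          (fun a ha => ha), Set.empty_disjoint _, by simp, ?_⟩
        rintro a rfl z hz hadj
        exact hno z hadj
      have h0 := h3.2 {v} ∅ ({v}ᶜ) hsep' ⟨v, rfl⟩ ⟨u, hu⟩
      simp [Set.ncard_empty] at h0
    obtain ⟨u0, hu0⟩ := hvadj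
    refine key s(v, u0) (SimpleGraph.mem_edgeFinset.mpr hu0) ?_
    intro e he hEq
    obtain ⟨u, v', a, b, _, hval, _, _, ha, hb⟩ := hψ e he
    rw [hval, Sym2.eq_iff] at hEq
    rcases hEq with ⟨rfl, _⟩ | ⟨_, rfl⟩
    · exact hvM u ha
    · exact hvM v' hb
  · -- some branch set has two vertices
    push_neg at hsing
    obtain ⟨w0, a0, ha0, b0, hb0, hne0⟩ := hsing
    obtain ⟨p⟩ := (hconn w0).preconnected ⟨a0, ha0⟩ ⟨b0, hb0⟩
    obtain ⟨z, hz⟩ := exists_adj_of_walk p (fun h => hne0 (congrArg Subtype.val h))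
    have hzadj : G.Adj a0 ↑z := hz
    have hMuniq2 : ∀ (u c : V), c ∈ M' u → c ∈ M w0 → u = ↑w0 := by
      intro u c hc hc'
      obtain ⟨hu, hm⟩ := hM'mem u c hc
      by_contra hne
      have hne' : (⟨u, hu⟩ : X) ≠ w0 := fun h => hne (congrArg Subtype.val h)
      exact Set.disjoint_left.mp (hdisj hne') hm hc'
    refine key s(a0, ↑z) (SimpleGraph.mem_edgeFinset.mpr hzadj) ?_
    intro e he hEq
    obtain ⟨u, v', a, b, _, hval, hneuv, _, ha, hb⟩ := hψ e he
    rw [hval, Sym2.eq_iff] at hEq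
    rcases hEq with ⟨h1, h2⟩ | ⟨h1, h2⟩
    · exact hneuv ((hMuniq2 u a ha (by rw [h1]; exact ha0)).trans
        (hMuniq2 v' b hb (by rw [h2]; exact z.2)).symm)
    · exact hneuv ((hMuniq2 u a ha (by rw [h1]; exact z.2)).trans
        (hMuniq2 v' b hb (by rw [h2]; exact ha0)).symm)
end

section
/- Crossing Lemma: Let G be a 3-connected finite simple graph, 𝒯 a G-tangle of order 4, and (Y₁,S₁,Z₁), (Y₂,S₂,Z₂) ∈ 𝒯_min distinct. Then either (Y₁,S₁,Z₁) and (Y₂,S₂,Z₂) are orthogonal, or Y₁ ∩ Y₂ = ∅, S₁ ∩ S₂ = ∅, and there are vertices s₁, s₂ with s₁s₂ an edge of G, S₁ ∩ Y₂ = {s₁} and S₂ ∩ Y₁ = {s₂}. -/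
variable {V : Type*} {W : Type*}

private lemma CL_sepFacts {V : Type*} {G : SimpleGraph V} {Y S Z : Set V}
    (h : IsSeparation G Y S Z) :
    (∀ v, v ∈ Y → v ∈ S → False) ∧ (∀ v, v ∈ Y → v ∈ Z → False) ∧
    (∀ v, v ∈ S → v ∈ Z → False) ∧ (∀ v, v ∈ Y ∨ v ∈ S ∨ v ∈ Z) ∧
    (∀ y ∈ Y, ∀ z ∈ Z, ¬ G.Adj y z) := by
  obtain ⟨h1, h2, h3, h4, h5⟩ := h
  refine ⟨fun v hv hs => Set.disjoint_left.1 h1 hv hs,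
    fun v hv hz => Set.disjoint_left.1 h2 hv hz,
    fun v hs hz => Set.disjoint_left.1 h3 hs hz, fun v => ?_, h5⟩
  have := Set.eq_univ_iff_forall.1 h4 v
  simp only [Set.mem_union] at this
  tauto

private lemma CL_mkSep {V : Type*} {G : SimpleGraph V} {Y S Z : Set V}
    (h1 : ∀ v, v ∈ Y → v ∈ S → False) (h2 : ∀ v, v ∈ Y → v ∈ Z → False)
    (h3 : ∀ v, v ∈ S → v ∈ Z → False) (h4 : ∀ v, v ∈ Y ∨ v ∈ S ∨ v ∈ Z)
    (h5 : ∀ y ∈ Y, ∀ z ∈ Z, ¬ G.Adj y z) : IsSeparation G Y S Z :=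
  ⟨Set.disjoint_left.2 h1, Set.disjoint_left.2 h2, Set.disjoint_left.2 h3,
    Set.eq_univ_iff_forall.2 (fun v => by
      have := h4 v
      simp only [Set.mem_union]
      tauto), h5⟩

private lemma CL_ncard3 {V : Type*} [Fintype V] {S A B C : Set V} (h : S = A ∪ B ∪ C)
    (hAB : Disjoint A B) (hAC : Disjoint A C) (hBC : Disjoint B C) :
    S.ncard = A.ncard + B.ncard + C.ncard := by
  subst h
  rw [Set.ncard_union_eq (by rw [Set.disjoint_union_left]; exact ⟨hAC, hBC⟩),
    Set.ncard_union_eq hAB]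

set_option maxHeartbeats 4000000

/-- Crossing Lemma: distinct minimal separations of a tangle of order 4
of a 3-connected graph are orthogonal or cross along a single crossedge. -/
theorem statement14 {V : Type*} [Fintype V] (G : SimpleGraph V)
    (h3 : KConnected 3 G) (T : Set (Set V × Set V × Set V)) (hT : IsTangle G 4 T)
    (Y₁ S₁ Z₁ Y₂ S₂ Z₂ : Set V)
    (h₁ : IsMinimalIn T (Y₁, S₁, Z₁)) (h₂ : IsMinimalIn T (Y₂, S₂, Z₂))
    (hne : (Y₁, S₁, Z₁) ≠ (Y₂, S₂, Z₂)) :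
    SepOrthogonal (Y₁, S₁, Z₁) (Y₂, S₂, Z₂) ∨
      (Y₁ ∩ Y₂ = ∅ ∧ S₁ ∩ S₂ = ∅ ∧
        ∃ s₁ s₂ : V, G.Adj s₁ s₂ ∧ S₁ ∩ Y₂ = {s₁} ∧ S₂ ∩ Y₁ = {s₂}) := by
  classical
  obtain ⟨hp₁T, hmin₁⟩ := h₁
  obtain ⟨hp₂T, hmin₂⟩ := h₂
  obtain ⟨hsep₁, hS₁lt⟩ := hT.1 _ hp₁T
  obtain ⟨hsep₂, hS₂lt⟩ := hT.1 _ hp₂T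
  have hS₁lt : S₁.ncard < 4 := hS₁lt
  have hS₂lt : S₂.ncard < 4 := hS₂lt
  obtain ⟨d₁YS, d₁YZ, d₁SZ, cov₁, e₁⟩ := CL_sepFacts hsep₁
  obtain ⟨d₂YS, d₂YZ, d₂SZ, cov₂, e₂⟩ := CL_sepFacts hsep₂
  have hZ₁ne : Z₁.Nonempty := hT.2.2.2 _ hp₁T
  have hZ₂ne : Z₂.Nonempty := hT.2.2.2 _ hp₂T
  -- the trivial separation (∅,∅,univ) is in T
  have sepEmpty : IsSeparation G (∅ : Set V) ∅ Set.univ :=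
    CL_mkSep (by simp) (by simp) (by simp) (by intro v; right; right; trivial)
      (by intro y hy; cases hy)
  have hEm : ((∅:Set V), (∅:Set V), Set.univ) ∈ T := by
    rcases hT.2.1 ∅ ∅ Set.univ sepEmpty (by simp) with h | h
    · exact h
    · exact absurd (hT.2.2.2 _ h) (by simp)
  -- Y₁ and Y₂ are nonempty
  have hY₁ne : Y₁.Nonempty := by
    rw [Set.nonempty_iff_ne_empty]
    intro hY₁
    have hSZu : S₁ ∪ Z₁ = Set.univ := by
      ext v
      simp only [Set.mem_union, Set.mem_univ, iff_true]
      rcases cov₁ v with h | h | h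
      · rw [hY₁] at h; cases h
      · exact Or.inl h
      · exact Or.inr h
    have hle : SepLE ((∅:Set V), (∅:Set V), Set.univ) (Y₁,S₁,Z₁) :=
      Or.inr ⟨by simpa using hSZu.symm, by simp⟩
    have heq := hmin₁ _ hEm hle
    rcases Set.eq_empty_or_nonempty Y₂ with hY₂ | hY₂
    · have hSZu₂ : S₂ ∪ Z₂ = Set.univ := by
        ext v
        simp only [Set.mem_union, Set.mem_univ, iff_true]
        rcases cov₂ v with h | h | h
        · rw [hY₂] at h; cases h
        · exact Or.inl h
        · exact Or.inr h
      have hle₂ : SepLE ((∅:Set V), (∅:Set V), Set.univ) (Y₂,S₂,Z₂) :=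
        Or.inr ⟨by simpa using hSZu₂.symm, by simp⟩
      have heq₂ := hmin₂ _ hEm hle₂
      exact hne (heq.symm.trans heq₂)
    · obtain ⟨y, hy⟩ := hY₂
      have hle₂ : SepLE (Y₂,S₂,Z₂) (Y₁,S₁,Z₁) := by
        left
        refine HasSubset.Subset.ssubset_of_ne (by simp [hSZu]) ?_
        intro hEq
        have : y ∈ S₂ ∪ Z₂ := by
          have : (S₂ ∪ Z₂ : Set V) = Set.univ := by
            simpa [hSZu] using hEq
          rw [this]; trivial
        rcases this with h | h
        · exact d₂YS y hy h
        · exact d₂YZ y hy h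
      exact hne ((hmin₁ _ hp₂T hle₂).symm)
  have hY₂ne : Y₂.Nonempty := by
    rw [Set.nonempty_iff_ne_empty]
    intro hY₂
    have hSZu₂ : S₂ ∪ Z₂ = Set.univ := by
      ext v
      simp only [Set.mem_union, Set.mem_univ, iff_true]
      rcases cov₂ v with h | h | h
      · rw [hY₂] at h; cases h
      · exact Or.inl h
      · exact Or.inr h
    have hle₂ : SepLE ((∅:Set V), (∅:Set V), Set.univ) (Y₂,S₂,Z₂) :=
      Or.inr ⟨by simpa using hSZu₂.symm, by simp⟩
    have heq₂ := hmin₂ _ hEm hle₂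
    obtain ⟨y, hy⟩ := hY₁ne
    have hle₁ : SepLE (Y₁,S₁,Z₁) (Y₂,S₂,Z₂) := by
      left
      refine HasSubset.Subset.ssubset_of_ne (by simp [hSZu₂]) ?_
      intro hEq
      have : y ∈ S₁ ∪ Z₁ := by
        have : (S₁ ∪ Z₁ : Set V) = Set.univ := by simpa [hSZu₂] using hEq
        rw [this]; trivial
      rcases this with h | h
      · exact d₁YS y hy h
      · exact d₁YZ y hy h
    exact hne (hmin₂ _ hp₁T hle₁)
  -- both separators have exactly 3 vertices
  have hS₁3 : S₁.ncard = 3 := by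
    have := h3.2 Y₁ S₁ Z₁ hsep₁ hY₁ne hZ₁ne
    omega
  have hS₂3 : S₂.ncard = 3 := by
    have := h3.2 Y₂ S₂ Z₂ hsep₂ hY₂ne hZ₂ne
    omega
  -- Lemma A: Y₁ ≠ Y₂
  have lemA : Y₁ ≠ Y₂ := by
    intro hYY
    have hSS : S₁ ≠ S₂ := by
      intro hSSeq
      apply hne
      have hZZ : Z₁ = Z₂ := by
        ext v
        constructor
        · intro hv
          rcases cov₂ v with h | h | h
          · exact absurd (hYY ▸ h) (fun hh => d₁YZ v hh hv)
          · exact absurd (hSSeq ▸ h) (fun hh => d₁SZ v hh hv)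
          · exact h
        · intro hv
          rcases cov₁ v with h | h | h
          · exact absurd (hYY ▸ h) (fun hh => d₂YZ v hh hv)
          · exact absurd (hSSeq ▸ h) (fun hh => d₂SZ v hh hv)
          · exact h
      rw [hYY, hSSeq, hZZ]
    -- (Y₁, S₁∩S₂, rest) is a proper separation of order < 3
    have hsep' : IsSeparation G Y₁ (S₁ ∩ S₂) (Y₁ ∪ S₁ ∩ S₂)ᶜ := by
      refine CL_mkSep (fun v hv hs => d₁YS v hv hs.1)
        (fun v hv hz => hz (Or.inl hv)) (fun v hs hz => hz (Or.inr hs))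
        (fun v => ?_) (fun y hy z hz hadj => ?_)
      · by_cases h : v ∈ Y₁ ∪ S₁ ∩ S₂
        · rcases h with h | h
          · exact Or.inl h
          · exact Or.inr (Or.inl h)
        · exact Or.inr (Or.inr h)
      · rcases cov₁ z with h | h | h
        · rcases cov₂ z with h' | h' | h'
          · exact hz (Or.inl h)
          · rcases cov₁ z with h'' | h'' | h''
            · exact hz (Or.inl h'')
            · exact hz (Or.inr ⟨h'', h'⟩)
            · exact e₁ y hy z h'' hadj
          · exact e₂ y (hYY ▸ hy) z h' hadj
        · rcases cov₂ z with h' | h' | h'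
          · exact hz (Or.inl (hYY ▸ h'))
          · exact hz (Or.inr ⟨h, h'⟩)
          · exact e₂ y (hYY ▸ hy) z h' hadj
        · exact e₁ y hy z h hadj
    have hZside : ((Y₁ ∪ S₁ ∩ S₂)ᶜ : Set V).Nonempty := by
      obtain ⟨z, hz⟩ := hZ₁ne
      exact ⟨z, fun hh => by
        rcases hh with hh | hh
        · exact d₁YZ z hh hz
        · exact d₁SZ z hh.1 hz⟩
    have hge := h3.2 _ _ _ hsep' hY₁ne hZside
    have hsub : (S₁ ∩ S₂ : Set V).ncard ≤ S₁.ncard :=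
      Set.ncard_le_ncard Set.inter_subset_left
    have hEqS : S₁ ∩ S₂ = S₁ := Set.eq_of_subset_of_ncard_le Set.inter_subset_left (by omega)
    have hsub₂ : S₁ ⊆ S₂ := by
      intro v hv
      have : v ∈ S₁ ∩ S₂ := hEqS.symm ▸ hv
      exact this.2
    exact hSS (Set.eq_of_subset_of_ncard_le hsub₂ (by omega))
  by_cases horth : SepOrthogonal (Y₁, S₁, Z₁) (Y₂, S₂, Z₂)
  · exact Or.inl horth
  right
  -- crossing witness
  have hcross : ∃ v, (v ∈ Y₁ ∨ v ∈ S₁) ∧ (v ∈ Y₂ ∨ v ∈ S₂) ∧ ¬(v ∈ S₁ ∧ v ∈ S₂) := by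
    rw [SepOrthogonal, Set.not_subset] at horth
    obtain ⟨v, hv1, hv2⟩ := horth
    simp only [Set.mem_inter_iff, Set.mem_union] at hv1 hv2
    exact ⟨v, hv1.1, hv1.2, hv2⟩
  -- cardinalities of the cells
  have hsum₁ : S₁.ncard = (S₁ ∩ Y₂).ncard + (S₁ ∩ S₂).ncard + (S₁ ∩ Z₂).ncard := by
    refine CL_ncard3 ?_ ?_ ?_ ?_
    · ext v
      simp only [Set.mem_union, Set.mem_inter_iff]
      rcases cov₂ v with h | h | h <;> tauto
    · exact Set.disjoint_left.2 (fun v hv hv' => d₂YS v hv.2 hv'.2)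
    · exact Set.disjoint_left.2 (fun v hv hv' => d₂YZ v hv.2 hv'.2)
    · exact Set.disjoint_left.2 (fun v hv hv' => d₂SZ v hv.2 hv'.2)
  have hsum₂ : S₂.ncard = (S₂ ∩ Y₁).ncard + (S₁ ∩ S₂).ncard + (S₂ ∩ Z₁).ncard := by
    have h0 : (S₁ ∩ S₂ : Set V).ncard = (S₂ ∩ S₁ : Set V).ncard := by rw [Set.inter_comm S₁ S₂]
    rw [h0]
    refine CL_ncard3 ?_ ?_ ?_ ?_
    · ext v
      simp only [Set.mem_union, Set.mem_inter_iff]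
      rcases cov₁ v with h | h | h <;> tauto
    · exact Set.disjoint_left.2 (fun v hv hv' => d₁YS v hv.2 hv'.2)
    · exact Set.disjoint_left.2 (fun v hv hv' => d₁YZ v hv.2 hv'.2)
    · exact Set.disjoint_left.2 (fun v hv hv' => d₁SZ v hv.2 hv'.2)
  -- Step 1: corner towards Z₁ ∩ Z₂ has order ≥ 4
  set Tc : Set V := (S₁ ∩ Z₂) ∪ (S₁ ∩ S₂) ∪ (S₂ ∩ Z₁) with hTc_def
  set Zc : Set V := Z₁ ∩ Z₂ with hZc_def
  set Yc : Set V := (Tc ∪ Zc)ᶜ with hYc_def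
  have hTc_card : Tc.ncard = (S₁ ∩ Z₂).ncard + (S₁ ∩ S₂).ncard + (S₂ ∩ Z₁).ncard := by
    refine CL_ncard3 rfl ?_ ?_ ?_
    · exact Set.disjoint_left.2 (fun v hv hv' => d₂SZ v hv'.2 hv.2)
    · exact Set.disjoint_left.2 (fun v hv hv' => d₂SZ v hv'.1 hv.2)
    · exact Set.disjoint_left.2 (fun v hv hv' => d₁SZ v hv.1 hv'.2)
  have hTcsep : IsSeparation G Yc Tc Zc := by
    refine CL_mkSep (fun v hv ht => hv (Or.inl ht)) (fun v hv hz => hv (Or.inr hz))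
      (fun v ht hz => ?_) (fun v => ?_) (fun y hy z hz hadj => ?_)
    · rcases ht with (ht | ht) | ht
      · exact d₁SZ v ht.1 hz.1
      · exact d₁SZ v ht.1 hz.1
      · exact d₂SZ v ht.1 hz.2
    · by_cases h : v ∈ Tc ∪ Zc
      · rcases h with h | h
        · exact Or.inr (Or.inl h)
        · exact Or.inr (Or.inr h)
      · exact Or.inl h
    · rcases cov₁ y with h | h | h
      · exact e₁ y h z hz.1 hadj
      · rcases cov₂ y with h' | h' | h'
        · exact e₂ y h' z hz.2 hadj
        · exact hy (Or.inl (Or.inl (Or.inr ⟨h, h'⟩)))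
        · exact hy (Or.inl (Or.inl (Or.inl ⟨h, h'⟩)))
      · rcases cov₂ y with h' | h' | h'
        · exact e₂ y h' z hz.2 hadj
        · exact hy (Or.inl (Or.inr ⟨h', h⟩))
        · exact hy (Or.inr ⟨h, h'⟩)
  have hYeq₁ : Y₁ = (S₁ ∪ Z₁)ᶜ := by
    ext v
    simp only [Set.mem_compl_iff, Set.mem_union]
    constructor
    · intro hv hc
      rcases hc with h | h
      · exact d₁YS v hv h
      · exact d₁YZ v hv h
    · intro h
      rcases cov₁ v with h' | h' | h'
      · exact h'
      · exact absurd (Or.inl h') h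
      · exact absurd (Or.inr h') h
  have hYeq₂ : Y₂ = (S₂ ∪ Z₂)ᶜ := by
    ext v
    simp only [Set.mem_compl_iff, Set.mem_union]
    constructor
    · intro hv hc
      rcases hc with h | h
      · exact d₂YS v hv h
      · exact d₂YZ v hv h
    · intro h
      rcases cov₂ v with h' | h' | h'
      · exact h'
      · exact absurd (Or.inl h') h
      · exact absurd (Or.inr h') h
  have hstep1 : 4 ≤ (S₁ ∩ Z₂).ncard + (S₁ ∩ S₂).ncard + (S₂ ∩ Z₁).ncard := by
    by_contra hlt
    push_neg at hlt
    have hmem : (Yc, Tc, Zc) ∈ T := by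
      rcases hT.2.1 Yc Tc Zc hTcsep (by omega) with h | h
      · exact h
      · exfalso
        have hYcKey : ∀ u v : V, G.Adj u v → u ∈ Yc → (u ∈ Z₁ ∨ v ∈ Z₁) →
            (u ∈ Z₂ ∨ v ∈ Z₂) → False := by
          intro u v hadj hu h1 h2
          rcases cov₁ u with hc | hc | hc
          · rcases h1 with h1 | h1
            · exact d₁YZ u hc h1
            · exact e₁ u hc v h1 hadj
          · rcases cov₂ u with hc' | hc' | hc'
            · rcases h2 with h2 | h2
              · exact d₂YZ u hc' h2
              · exact e₂ u hc' v h2 hadj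
            · exact hu (Or.inl (Or.inl (Or.inr ⟨hc, hc'⟩)))
            · exact hu (Or.inl (Or.inl (Or.inl ⟨hc, hc'⟩)))
          · rcases cov₂ u with hc' | hc' | hc'
            · rcases h2 with h2 | h2
              · exact d₂YZ u hc' h2
              · exact e₂ u hc' v h2 hadj
            · exact hu (Or.inl (Or.inr ⟨hc', hc⟩))
            · exact hu (Or.inr ⟨hc, hc'⟩)
        rcases hT.2.2.1 _ hp₁T _ hp₂T _ h with hne' | ⟨u, v, huv, hu1, hu2, hu3⟩
        · obtain ⟨x, hx⟩ := hne'
          have hx1 : x ∈ Z₁ ∩ Z₂ := hx.1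
          have hx2 : x ∈ Yc := hx.2
          exact hx2 (Set.mem_union_right _ hx1)
        · have hu1' : u ∈ Z₁ ∨ v ∈ Z₁ := hu1
          have hu2' : u ∈ Z₂ ∨ v ∈ Z₂ := hu2
          have hu3' : u ∈ Yc ∨ v ∈ Yc := hu3
          rcases hu3' with hu3' | hu3'
          · exact hYcKey u v huv hu3' hu1' hu2'
          · exact hYcKey v u huv.symm hu3' hu1'.symm hu2'.symm
    have hsub₁ : Tc ∪ Zc ⊆ S₁ ∪ Z₁ := by
      rintro v (((h | h) | h) | h)
      · exact Or.inl h.1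
      · exact Or.inl h.1
      · exact Or.inr h.2
      · exact Or.inr h.1
    have hsub₂ : Tc ∪ Zc ⊆ S₂ ∪ Z₂ := by
      rintro v (((h | h) | h) | h)
      · exact Or.inr h.2
      · exact Or.inl h.2
      · exact Or.inl h.1
      · exact Or.inr h.2
    have hEq₁ : Tc ∪ Zc = S₁ ∪ Z₁ := by
      by_contra hne'
      have heq := hmin₁ _ hmem (Or.inl (hsub₁.ssubset_of_ne hne'))
      simp only [Prod.mk.injEq] at heq
      exact hne' (by rw [heq.2.1, heq.2.2])
    have hEq₂ : Tc ∪ Zc = S₂ ∪ Z₂ := by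
      by_contra hne'
      have heq := hmin₂ _ hmem (Or.inl (hsub₂.ssubset_of_ne hne'))
      simp only [Prod.mk.injEq] at heq
      exact hne' (by rw [heq.2.1, heq.2.2])
    exact lemA (by rw [hYeq₁, hYeq₂, ← hEq₁, ← hEq₂])
  -- arithmetic consequences
  have hab2 : (S₁ ∩ Y₂).ncard + (S₂ ∩ Y₁).ncard + (S₁ ∩ S₂).ncard ≤ 2 := by omega
  -- Step 3: Y₁ ∩ Y₂ = ∅
  have hSZ₂ne : (S₁ ∩ Z₂ : Set V).Nonempty := Set.nonempty_of_ncard_ne_zero (by omega)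
  have hYY : Y₁ ∩ Y₂ = ∅ := by
    by_contra hYYne
    have hYYn : (Y₁ ∩ Y₂ : Set V).Nonempty := Set.nonempty_iff_ne_empty.2 hYYne
    set Ty : Set V := (S₁ ∩ Y₂) ∪ (S₁ ∩ S₂) ∪ (S₂ ∩ Y₁) with hTy_def
    have hTy_card : Ty.ncard = (S₁ ∩ Y₂).ncard + (S₁ ∩ S₂).ncard + (S₂ ∩ Y₁).ncard := by
      refine CL_ncard3 rfl ?_ ?_ ?_
      · exact Set.disjoint_left.2 (fun v hv hv' => d₂YS v hv.2 hv'.2)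
      · exact Set.disjoint_left.2 (fun v hv hv' => d₂YS v hv.2 hv'.1)
      · exact Set.disjoint_left.2 (fun v hv hv' => d₁YS v hv'.2 hv.1)
    have hsepY : IsSeparation G (Y₁ ∩ Y₂) Ty (Y₁ ∩ Y₂ ∪ Ty)ᶜ := by
      refine CL_mkSep (fun v hv ht => ?_) (fun v hv hz => hz (Or.inl hv))
        (fun v ht hz => hz (Or.inr ht)) (fun v => ?_) (fun y hy z hz hadj => ?_)
      · rcases ht with (ht | ht) | ht
        · exact d₁YS v hv.1 ht.1
        · exact d₁YS v hv.1 ht.1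
        · exact d₂YS v hv.2 ht.1
      · by_cases h : v ∈ Y₁ ∩ Y₂ ∪ Ty
        · rcases h with h | h
          · exact Or.inl h
          · exact Or.inr (Or.inl h)
        · exact Or.inr (Or.inr h)
      · rcases cov₁ z with h | h | h
        · rcases cov₂ z with h' | h' | h'
          · exact hz (Or.inl ⟨h, h'⟩)
          · exact hz (Or.inr (Or.inr ⟨h', h⟩))
          · exact e₂ y hy.2 z h' hadj
        · rcases cov₂ z with h' | h' | h'
          · exact hz (Or.inr (Or.inl (Or.inl ⟨h, h'⟩)))
          · exact hz (Or.inr (Or.inl (Or.inr ⟨h, h'⟩)))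
          · exact e₂ y hy.2 z h' hadj
        · exact e₁ y hy.1 z h hadj
    have hZsideY : ((Y₁ ∩ Y₂ ∪ Ty)ᶜ : Set V).Nonempty := by
      obtain ⟨w, hw⟩ := hSZ₂ne
      refine ⟨w, fun hh => ?_⟩
      rcases hh with hh | (hh | hh) | hh
      · exact d₁YS w hh.1 hw.1
      · exact d₂YZ w hh.2 hw.2
      · exact d₂SZ w hh.2 hw.2
      · exact d₂SZ w hh.1 hw.2
    have := h3.2 _ _ _ hsepY hYYn hZsideY
    omega
  -- Step 4: both S₁∩Y₂ and S₂∩Y₁ are singletons, S₁∩S₂ = ∅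
  have ha1 : 1 ≤ (S₁ ∩ Y₂).ncard := by
    by_contra ha0
    have hSY₂emp : S₁ ∩ Y₂ = ∅ := (Set.ncard_eq_zero (Set.toFinite _)).1 (by omega)
    have ha'1 : 1 ≤ (S₂ ∩ Y₁).ncard := by
      obtain ⟨v, hv1, hv2, hv3⟩ := hcross
      rcases hv1 with h | h
      · rcases hv2 with h' | h'
        · exact absurd (Set.mem_inter h h') (by rw [hYY]; simp)
        · have : v ∈ S₂ ∩ Y₁ := ⟨h', h⟩
          have := (Set.ncard_pos (Set.toFinite _)).2 ⟨v, this⟩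
          omega
      · rcases hv2 with h' | h'
        · exact absurd (Set.mem_inter h h') (by rw [hSY₂emp]; simp)
        · exact absurd ⟨h, h'⟩ hv3
    set T' : Set V := (S₁ ∩ S₂) ∪ (S₂ ∩ Z₁) with hT'_def
    have hT'_card : T'.ncard = (S₁ ∩ S₂).ncard + (S₂ ∩ Z₁).ncard :=
      Set.ncard_union_eq (Set.disjoint_left.2 (fun v hv hv' => d₁SZ v hv.1 hv'.2))
    have hsepT' : IsSeparation G (T' ∪ Y₂)ᶜ T' Y₂ := by
      refine CL_mkSep (fun v hv ht => hv (Or.inl ht)) (fun v hv hz => hv (Or.inr hz))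
        (fun v ht hz => ?_) (fun v => ?_) (fun y hy z hz hadj => ?_)
      · rcases ht with ht | ht
        · exact d₂YS v hz ht.2
        · exact d₂YS v hz ht.1
      · by_cases h : v ∈ T' ∪ Y₂
        · rcases h with h | h
          · exact Or.inr (Or.inl h)
          · exact Or.inr (Or.inr h)
        · exact Or.inl h
      · rcases cov₂ y with h | h | h
        · exact hy (Or.inr h)
        · rcases cov₁ y with h' | h' | h'
          · rcases cov₁ z with h'' | h'' | h''
            · exact absurd (Set.mem_inter h'' hz) (by rw [hYY]; simp)
            · exact absurd (Set.mem_inter h'' hz) (by rw [hSY₂emp]; exact Set.notMem_empty z)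
            · exact e₁ y h' z h'' hadj
          · exact hy (Or.inl (Or.inl ⟨h', h⟩))
          · exact hy (Or.inl (Or.inr ⟨h, h'⟩))
        · exact e₂ z hz y h hadj.symm
    have hYsideT' : ((T' ∪ Y₂)ᶜ : Set V).Nonempty := by
      obtain ⟨y, hy⟩ := hY₁ne
      refine ⟨y, fun hh => ?_⟩
      rcases hh with (hh | hh) | hh
      · exact d₁YS y hy hh.1
      · exact d₁YZ y hy hh.2
      · exact absurd (Set.mem_inter hy hh) (by rw [hYY]; simp)
    have := h3.2 _ _ _ hsepT' hYsideT' hY₂ne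
    omega
  have ha'1 : 1 ≤ (S₂ ∩ Y₁).ncard := by
    by_contra ha0
    have hSY₁emp : S₂ ∩ Y₁ = ∅ := (Set.ncard_eq_zero (Set.toFinite _)).1 (by omega)
    set T' : Set V := (S₁ ∩ S₂) ∪ (S₁ ∩ Z₂) with hT'_def
    have hT'_card : T'.ncard = (S₁ ∩ S₂).ncard + (S₁ ∩ Z₂).ncard :=
      Set.ncard_union_eq (Set.disjoint_left.2 (fun v hv hv' => d₂SZ v hv.2 hv'.2))
    have hsepT' : IsSeparation G (T' ∪ Y₁)ᶜ T' Y₁ := by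
      refine CL_mkSep (fun v hv ht => hv (Or.inl ht)) (fun v hv hz => hv (Or.inr hz))
        (fun v ht hz => ?_) (fun v => ?_) (fun y hy z hz hadj => ?_)
      · rcases ht with ht | ht
        · exact d₁YS v hz ht.1
        · exact d₁YS v hz ht.1
      · by_cases h : v ∈ T' ∪ Y₁
        · rcases h with h | h
          · exact Or.inr (Or.inl h)
          · exact Or.inr (Or.inr h)
        · exact Or.inl h
      · rcases cov₁ y with h | h | h
        · exact hy (Or.inr h)
        · rcases cov₂ y with h' | h' | h'
          · rcases cov₂ z with h'' | h'' | h''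
            · exact absurd (Set.mem_inter hz h'') (by rw [hYY]; simp)
            · exact absurd (Set.mem_inter h'' hz) (by rw [hSY₁emp]; exact Set.notMem_empty z)
            · exact e₂ y h' z h'' hadj
          · exact hy (Or.inl (Or.inl ⟨h, h'⟩))
          · exact hy (Or.inl (Or.inr ⟨h, h'⟩))
        · exact e₁ z hz y h hadj.symm
    have hYsideT' : ((T' ∪ Y₁)ᶜ : Set V).Nonempty := by
      obtain ⟨y, hy⟩ := hY₂ne
      refine ⟨y, fun hh => ?_⟩
      rcases hh with (hh | hh) | hh
      · exact d₂YS y hy hh.2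
      · exact d₂YZ y hy hh.2
      · exact absurd (Set.mem_inter hh hy) (by rw [hYY]; simp)
    have := h3.2 _ _ _ hsepT' hYsideT' hY₁ne
    omega
  have hb0 : (S₁ ∩ S₂ : Set V).ncard = 0 := by omega
  have hSSemp : S₁ ∩ S₂ = ∅ := (Set.ncard_eq_zero (Set.toFinite _)).1 hb0
  obtain ⟨s₁, hs₁⟩ := Set.ncard_eq_one.mp (show (S₁ ∩ Y₂).ncard = 1 by omega)
  obtain ⟨s₂, hs₂⟩ := Set.ncard_eq_one.mp (show (S₂ ∩ Y₁).ncard = 1 by omega)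
  have hs₁mem : s₁ ∈ S₁ ∩ Y₂ := by rw [hs₁]; rfl
  have hs₂mem : s₂ ∈ S₂ ∩ Y₁ := by rw [hs₂]; rfl
  -- the crossedge
  have hadj : G.Adj s₁ s₂ := by
    by_contra hnadj
    have hsep' : IsSeparation G Y₁ (S₁ \ {s₁}) (Z₁ ∪ {s₁}) := by
      refine CL_mkSep (fun v hv ht => d₁YS v hv ht.1) (fun v hv hz => ?_)
        (fun v ht hz => ?_) (fun v => ?_) (fun y hy z hz hadj' => ?_)
      · rcases hz with hz | hz
        · exact d₁YZ v hv hz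
        · exact d₁YS v hv (hz ▸ hs₁mem.1)
      · rcases hz with hz | hz
        · exact d₁SZ v ht.1 hz
        · exact ht.2 hz
      · rcases cov₁ v with h | h | h
        · exact Or.inl h
        · by_cases hv : v = s₁
          · exact Or.inr (Or.inr (Or.inr hv))
          · exact Or.inr (Or.inl ⟨h, hv⟩)
        · exact Or.inr (Or.inr (Or.inl h))
      · rcases hz with hz | hz
        · exact e₁ y hy z hz hadj'
        · rcases cov₂ y with h | h | h
          · exact absurd (Set.mem_inter hy h) (by rw [hYY]; simp)
          · have hys₂ : y = s₂ := by
              have : y ∈ S₂ ∩ Y₁ := ⟨h, hy⟩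
              rw [hs₂] at this
              exact this
            exact hnadj (by rw [← hys₂, ← hz]; exact hadj'.symm)
          · exact e₂ s₁ hs₁mem.2 y h (hz ▸ hadj'.symm)
    have hZside : (Z₁ ∪ {s₁} : Set V).Nonempty := ⟨s₁, Or.inr rfl⟩
    have hge := h3.2 _ _ _ hsep' hY₁ne hZside
    have hcard : (S₁ \ {s₁}).ncard = S₁.ncard - 1 :=
      Set.ncard_diff_singleton_of_mem hs₁mem.1
    omega
  exact ⟨hYY, hSSemp, s₁, s₂, hadj, hs₁, hs₂⟩
end

section
/- Crossedge Independence Lemma: Let G be a 3-connected finite simple graph and 𝒯 a G-tangle of order 4. Let (Y,S,Z), (Y₁,S₁,Z₁), (Y₂,S₂,Z₂) ∈ 𝒯_min be pairwise distinct such that (Y,S,Z) crosses both (Y₁,S₁,Z₁) and (Y₂,S₂,Z₂), and for i = 1, 2 let sᵢsᵢ' be the crossedge of (Y,S,Z) and (Yᵢ,Sᵢ,Zᵢ), where S ∩ Yᵢ = {sᵢ} and Sᵢ ∩ Y = {sᵢ'}. Then: (1) S is an independent set of G; (2) if (Y,S,Z) is degenerate, then s₁, s₂, s₁' are mutually distinct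 and s₁' = s₂'; (3) if (Y,S,Z) is non-degenerate, then s₁, s₂, s₁', s₂' are mutually distinct. -/
variable {V : Type*} {W : Type*}

section CrossedgeHelpers

variable [Fintype V] {G : SimpleGraph V}

private lemma sep_cases {Y S Z : Set V} (sep : IsSeparation G Y S Z) (x : V) :
    x ∈ Y ∨ x ∈ S ∨ x ∈ Z := by
  have h := sep.2.2.2.1
  have hx : x ∈ Y ∪ S ∪ Z := by rw [h]; trivial
  rcases hx with (h | h) | h <;> tauto

private lemma dj {s t : Set V} (h : Disjoint s t) {a : V} (ha : a ∈ s) (hb : a ∈ t) :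
    False := Set.disjoint_left.mp h ha hb

/-- The minimality/corner lemma: if `(Y₁,S₁,Z₁)` is `⪯`-minimal in the tangle `T`,
`(Y₂,S₂,Z₂) ∈ T`, the corner boundary towards `Z₁ ∩ Z₂` has order `< 4`, and some
vertex of `Y₂` lies in `S₁ ∪ Z₁`, then we get a contradiction. -/
private lemma mincorner {T : Set (Set V × Set V × Set V)} (hT : IsTangle G 4 T)
    {Y₁ S₁ Z₁ Y₂ S₂ Z₂ : Set V}
    (h₁ : IsMinimalIn T (Y₁, S₁, Z₁)) (h₂ : (Y₂, S₂, Z₂) ∈ T)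
    (sep₁ : IsSeparation G Y₁ S₁ Z₁) (sep₂ : IsSeparation G Y₂ S₂ Z₂)
    (hB : ((S₁ ∩ Z₂) ∪ (S₁ ∩ S₂) ∪ (S₂ ∩ Z₁)).ncard < 4)
    {x : V} (hx₂ : x ∈ Y₂) (hx₁ : x ∈ S₁ ∪ Z₁) : False := by
  set B : Set V := (S₁ ∩ Z₂) ∪ (S₁ ∩ S₂) ∪ (S₂ ∩ Z₁) with hBdef
  have e₁ := sep₁.2.2.2.2
  have e₂ := sep₂.2.2.2.2
  have sepQ : IsSeparation G (Y₁ ∪ Y₂) B (Z₁ ∩ Z₂) := by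
    refine ⟨?_, ?_, ?_, ?_, ?_⟩
    · rw [Set.disjoint_left]
      rintro a (h | h) (((⟨h1, h2⟩ | ⟨h1, h2⟩) | ⟨h1, h2⟩))
      · exact dj sep₁.1 h h1
      · exact dj sep₁.1 h h1
      · exact dj sep₁.2.1 h h2
      · exact dj sep₂.2.1 h h2
      · exact dj sep₂.1 h h2
      · exact dj sep₂.1 h h1
    · rw [Set.disjoint_left]
      rintro a (h | h) ⟨h1, h2⟩
      · exact dj sep₁.2.1 h h1
      · exact dj sep₂.2.1 h h2
    · rw [Set.disjoint_left]
      rintro a (((⟨h1, h2⟩ | ⟨h1, h2⟩) | ⟨h1, h2⟩)) ⟨h3, h4⟩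
      · exact dj sep₁.2.2.1 h1 h3
      · exact dj sep₁.2.2.1 h1 h3
      · exact dj sep₂.2.2.1 h1 h4
    · ext a
      simp only [hBdef, Set.mem_union, Set.mem_inter_iff, Set.mem_univ, iff_true]
      rcases sep_cases sep₁ a with h1 | h1 | h1 <;>
        rcases sep_cases sep₂ a with h2 | h2 | h2 <;> tauto
    · rintro y (hy | hy) z ⟨hz1, hz2⟩
      · exact e₁ y hy z hz1
      · exact e₂ y hy z hz2
  have hxB : x ∉ B ∪ (Z₁ ∩ Z₂) := by
    rintro ((((⟨h1, h2⟩ | ⟨h1, h2⟩) | ⟨h1, h2⟩)) | ⟨h1, h2⟩)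
    · exact dj sep₂.2.1 hx₂ h2
    · exact dj sep₂.1 hx₂ h2
    · exact dj sep₂.1 hx₂ h1
    · exact dj sep₂.2.1 hx₂ h2
  have hQ : (Y₁ ∪ Y₂, B, Z₁ ∩ Z₂) ∈ T := by
    rcases hT.2.1 _ _ _ sepQ hB with hQ | hQ
    · exact hQ
    · exfalso
      have hkey : ∀ u v : V, G.Adj u v → (u ∈ Z₁ ∨ v ∈ Z₁) → (u ∈ Z₂ ∨ v ∈ Z₂) →
          u ∈ Y₁ ∪ Y₂ → False := by
        intro u v adj h1 h2 hu
        rcases hu with hu | hu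
        · have hv : v ∈ Z₁ := h1.resolve_left (fun h => dj sep₁.2.1 hu h)
          exact e₁ u hu v hv adj
        · have hv : v ∈ Z₂ := h2.resolve_left (fun h => dj sep₂.2.1 hu h)
          exact e₂ u hu v hv adj
      rcases hT.2.2.1 _ h₁.1 _ h₂ _ hQ with ⟨a, ⟨⟨ha1, ha2⟩, ha3⟩⟩ |
        ⟨u, v, huv, hu1, hu2, hu3⟩
      · rcases ha3 with h | h
        · exact dj sep₁.2.1 h ha1
        · exact dj sep₂.2.1 h ha2
      · rcases hu3 with h | h
        · exact hkey u v huv hu1 hu2 h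
        · exact hkey v u huv.symm hu1.symm hu2.symm h
  have hsub : B ∪ (Z₁ ∩ Z₂) ⊆ S₁ ∪ Z₁ := by
    rintro a ((((⟨h1, h2⟩ | ⟨h1, h2⟩) | ⟨h1, h2⟩)) | ⟨h1, h2⟩)
    · exact Or.inl h1
    · exact Or.inl h1
    · exact Or.inr h2
    · exact Or.inr h1
  have hle : SepLE (Y₁ ∪ Y₂, B, Z₁ ∩ Z₂) (Y₁, S₁, Z₁) := by
    left
    rw [Set.ssubset_def]
    exact ⟨hsub, fun h => hxB (h hx₁)⟩
  have heq := h₁.2 _ hQ hle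
  have hS : B = S₁ := congrArg (fun p => p.2.1) heq
  have hZ : Z₁ ∩ Z₂ = Z₁ := congrArg (fun p => p.2.2) heq
  apply hxB
  rw [Set.mem_union, hS, hZ]
  exact hx₁

/-- Distinct `⪯`-minimal separations of a tangle of order 4 in a 3-connected
graph have disjoint `Y`-sides. -/
private lemma disjY {T : Set (Set V × Set V × Set V)} (hT : IsTangle G 4 T)
    (h3 : KConnected 3 G) {Y₁ S₁ Z₁ Y₂ S₂ Z₂ : Set V}
    (h₁ : IsMinimalIn T (Y₁, S₁, Z₁)) (h₂ : IsMinimalIn T (Y₂, S₂, Z₂))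
    (hne : (Y₁, S₁, Z₁) ≠ (Y₂, S₂, Z₂)) : Y₁ ∩ Y₂ = ∅ := by
  by_contra hcon
  obtain ⟨s, hs1, hs2⟩ := Set.nonempty_iff_ne_empty.mpr hcon
  have sep₁ : IsSeparation G Y₁ S₁ Z₁ := (hT.1 _ h₁.1).1
  have sep₂ : IsSeparation G Y₂ S₂ Z₂ := (hT.1 _ h₂.1).1
  have hlt₁ : S₁.ncard < 4 := (hT.1 _ h₁.1).2
  have hlt₂ : S₂.ncard < 4 := (hT.1 _ h₂.1).2
  have hZ₁ : Z₁.Nonempty := hT.2.2.2 _ h₁.1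
  have hZ₂ : Z₂.Nonempty := hT.2.2.2 _ h₂.1
  have hS₁3 : S₁.ncard = 3 := by
    have := h3.2 _ _ _ sep₁ ⟨s, hs1⟩ hZ₁; omega
  have hS₂3 : S₂.ncard = 3 := by
    have := h3.2 _ _ _ sep₂ ⟨s, hs2⟩ hZ₂; omega
  by_cases hYY : Y₁ = Y₂
  · subst hYY
    by_cases hS : 3 ≤ (S₁ ∩ S₂).ncard
    · have e1 : S₁ ∩ S₂ = S₁ :=
        Set.eq_of_subset_of_ncard_le Set.inter_subset_left (by omega)
      have e2 : S₁ ∩ S₂ = S₂ :=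
        Set.eq_of_subset_of_ncard_le Set.inter_subset_right (by omega)
      have eS : S₁ = S₂ := by rw [← e1, e2]
      have eZ : Z₁ = Z₂ := by
        have c₁ : Z₁ = (Y₁ ∪ S₁)ᶜ := by
          ext a
          simp only [Set.mem_compl_iff, Set.mem_union]
          constructor
          · intro h
            push_neg
            exact ⟨fun h' => dj sep₁.2.1 h' h, fun h' => dj sep₁.2.2.1 h' h⟩
          · intro h
            push_neg at h
            rcases sep_cases sep₁ a with h' | h' | h' <;> tauto
        have c₂ : Z₂ = (Y₁ ∪ S₂)ᶜ := by
          ext a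
          simp only [Set.mem_compl_iff, Set.mem_union]
          constructor
          · intro h
            push_neg
            exact ⟨fun h' => dj sep₂.2.1 h' h, fun h' => dj sep₂.2.2.1 h' h⟩
          · intro h
            push_neg at h
            rcases sep_cases sep₂ a with h' | h' | h' <;> tauto
        rw [c₁, c₂, eS]
      exact hne (by rw [eS, eZ])
    · apply hS
      apply h3.2 Y₁ (S₁ ∩ S₂) ((Y₁ ∪ (S₁ ∩ S₂))ᶜ) ?_ ⟨s, hs1⟩ ?_
      · refine ⟨sep₁.1.mono_right Set.inter_subset_left, ?_, ?_, ?_, ?_⟩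
        · rw [Set.disjoint_left]; intro a ha hc; exact hc (Or.inl ha)
        · rw [Set.disjoint_left]; intro a ha hc; exact hc (Or.inr ha)
        · rw [Set.union_compl_self]
        · intro y hy z hz adj
          have hz1 : z ∉ Z₁ := fun h => sep₁.2.2.2.2 y hy z h adj
          have hz2 : z ∉ Z₂ := fun h => sep₂.2.2.2.2 y hy z h adj
          have hzY : z ∉ Y₁ := fun h => hz (Or.inl h)
          have hzS₁ : z ∈ S₁ := by rcases sep_cases sep₁ z with h | h | h <;> tauto
          have hzS₂ : z ∈ S₂ := by rcases sep_cases sep₂ z with h | h | h <;> tauto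
          exact hz (Or.inr ⟨hzS₁, hzS₂⟩)
      · obtain ⟨z, hz⟩ := hZ₁
        refine ⟨z, fun hc => ?_⟩
        rcases hc with h | ⟨h, _⟩
        · exact dj sep₁.2.1 h hz
        · exact dj sep₁.2.2.1 h hz
  · have hx : (∃ x, x ∈ Y₂ ∧ x ∈ S₁ ∪ Z₁) ∨ (∃ x, x ∈ Y₁ ∧ x ∈ S₂ ∪ Z₂) := by
      by_cases hsub : Y₂ ⊆ Y₁
      · right
        have hns : ¬ Y₁ ⊆ Y₂ := fun h => hYY (Set.Subset.antisymm h hsub)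
        obtain ⟨x, hx1, hx2⟩ := Set.not_subset.mp hns
        refine ⟨x, hx1, ?_⟩
        rcases sep_cases sep₂ x with h | h | h
        · exact absurd h hx2
        · exact Or.inl h
        · exact Or.inr h
      · left
        obtain ⟨x, hx1, hx2⟩ := Set.not_subset.mp hsub
        refine ⟨x, hx1, ?_⟩
        rcases sep_cases sep₁ x with h | h | h
        · exact absurd h hx2
        · exact Or.inl h
        · exact Or.inr h
    set BZ : Set V := (S₁ ∩ Z₂) ∪ (S₁ ∩ S₂) ∪ (S₂ ∩ Z₁) with hBZdef
    by_cases hBZ : BZ.ncard < 4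
    · rcases hx with ⟨x, hx2, hx1⟩ | ⟨x, hx1, hx2⟩
      · exact mincorner hT h₁ h₂.1 sep₁ sep₂ hBZ hx2 hx1
      · have hEq : (S₂ ∩ Z₁) ∪ (S₂ ∩ S₁) ∪ (S₁ ∩ Z₂) = BZ := by
          rw [hBZdef]; ext a
          simp only [Set.mem_union, Set.mem_inter_iff]
          tauto
        exact mincorner hT h₂ h₁.1 sep₂ sep₁ (by rw [hEq]; exact hBZ) hx1 hx2
    · set BY : Set V := (S₁ ∩ Y₂) ∪ (S₁ ∩ S₂) ∪ (S₂ ∩ Y₁) with hBYdef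
      have hu : BY ∪ BZ = S₁ ∪ S₂ := by
        ext a
        have c1 := sep_cases sep₁ a
        have c2 := sep_cases sep₂ a
        simp only [hBYdef, hBZdef, Set.mem_union, Set.mem_inter_iff]
        constructor
        · rintro (((⟨h, _⟩ | ⟨h, _⟩) | ⟨h, _⟩) | ((⟨h, _⟩ | ⟨h, _⟩) | ⟨h, _⟩))
          exacts [Or.inl h, Or.inl h, Or.inr h, Or.inl h, Or.inl h, Or.inr h]
        · rintro (h | h)
          · rcases c2 with h2 | h2 | h2
            · exact Or.inl (Or.inl (Or.inl ⟨h, h2⟩))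
            · exact Or.inl (Or.inl (Or.inr ⟨h, h2⟩))
            · exact Or.inr (Or.inl (Or.inl ⟨h, h2⟩))
          · rcases c1 with h1 | h1 | h1
            · exact Or.inl (Or.inr ⟨h, h1⟩)
            · exact Or.inl (Or.inl (Or.inr ⟨h1, h⟩))
            · exact Or.inr (Or.inr ⟨h, h1⟩)
      have hi : BY ∩ BZ = S₁ ∩ S₂ := by
        ext a
        have d1 : a ∈ Y₁ → a ∈ Z₁ → False := fun p q => dj sep₁.2.1 p q
        have d2 : a ∈ Y₂ → a ∈ Z₂ → False := fun p q => dj sep₂.2.1 p q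
        have d3 : a ∈ S₁ → a ∈ Z₁ → False := fun p q => dj sep₁.2.2.1 p q
        have d4 : a ∈ S₂ → a ∈ Z₂ → False := fun p q => dj sep₂.2.2.1 p q
        have d5 : a ∈ Y₁ → a ∈ S₁ → False := fun p q => dj sep₁.1 p q
        have d6 : a ∈ Y₂ → a ∈ S₂ → False := fun p q => dj sep₂.1 p q
        simp only [hBYdef, hBZdef, Set.mem_union, Set.mem_inter_iff]
        constructor
        · rintro ⟨hA, hB⟩
          rcases hA with (⟨h1, h2⟩ | ⟨h1, h2⟩) | ⟨h1, h2⟩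
          · rcases hB with (⟨h3, h4⟩ | ⟨h3, h4⟩) | ⟨h3, h4⟩
            · exact (d2 h2 h4).elim
            · exact (d6 h2 h4).elim
            · exact (d6 h2 h3).elim
          · exact ⟨h1, h2⟩
          · rcases hB with (⟨h3, h4⟩ | ⟨h3, h4⟩) | ⟨h3, h4⟩
            · exact (d5 h2 h3).elim
            · exact ⟨h3, h4⟩
            · exact (d1 h2 h4).elim
        · rintro ⟨h1, h2⟩
          exact ⟨Or.inl (Or.inr ⟨h1, h2⟩), Or.inl (Or.inr ⟨h1, h2⟩)⟩
      have hcard : BY.ncard + BZ.ncard = 6 := by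
        have k1 := Set.ncard_union_add_ncard_inter BY BZ
        have k2 := Set.ncard_union_add_ncard_inter S₁ S₂
        rw [hu, hi] at k1
        omega
      have hBY2 : BY.ncard ≤ 2 := by omega
      have hlow : 3 ≤ BY.ncard := by
        apply h3.2 (Y₁ ∩ Y₂) BY (((Y₁ ∩ Y₂) ∪ BY)ᶜ) ?_ ⟨s, hs1, hs2⟩ ?_
        · refine ⟨?_, ?_, ?_, ?_, ?_⟩
          · rw [Set.disjoint_left]
            rintro a ⟨ha1, ha2⟩ (((⟨h1, h2⟩ | ⟨h1, h2⟩) | ⟨h1, h2⟩))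
            · exact dj sep₁.1 ha1 h1
            · exact dj sep₁.1 ha1 h1
            · exact dj sep₂.1 ha2 h1
          · rw [Set.disjoint_left]; intro a ha hc; exact hc (Or.inl ha)
          · rw [Set.disjoint_left]; intro a ha hc; exact hc (Or.inr ha)
          · rw [Set.union_compl_self]
          · rintro y ⟨hy1, hy2⟩ z hz adj
            have hz1 : z ∉ Z₁ := fun h => sep₁.2.2.2.2 y hy1 z h adj
            have hz2 : z ∉ Z₂ := fun h => sep₂.2.2.2.2 y hy2 z h adj
            apply hz
            rcases sep_cases sep₁ z with h | h | h
            · rcases sep_cases sep₂ z with h' | h' | h'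
              · exact Or.inl ⟨h, h'⟩
              · exact Or.inr (Or.inr ⟨h', h⟩)
              · exact absurd h' hz2
            · rcases sep_cases sep₂ z with h' | h' | h'
              · exact Or.inr (Or.inl (Or.inl ⟨h, h'⟩))
              · exact Or.inr (Or.inl (Or.inr ⟨h, h'⟩))
              · exact absurd h' hz2
            · exact absurd h hz1
        · obtain ⟨z, hz⟩ := hZ₁
          refine ⟨z, fun hc => ?_⟩
          rcases hc with ⟨h, _⟩ | (((⟨h1, h2⟩ | ⟨h1, h2⟩) | ⟨h1, h2⟩))
          · exact dj sep₁.2.1 h hz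
          · exact dj sep₁.2.2.1 h1 hz
          · exact dj sep₁.2.2.1 h1 hz
          · exact dj sep₁.2.1 h2 hz
      omega

end CrossedgeHelpers

/-- Crossedge Independence Lemma. -/
theorem statement16 {V : Type*} [Fintype V] (G : SimpleGraph V)
    (h3 : KConnected 3 G) (T : Set (Set V × Set V × Set V)) (hT : IsTangle G 4 T)
    (Y S Z Y₁ S₁ Z₁ Y₂ S₂ Z₂ : Set V)
    (h : IsMinimalIn T (Y, S, Z))
    (h₁ : IsMinimalIn T (Y₁, S₁, Z₁)) (h₂ : IsMinimalIn T (Y₂, S₂, Z₂))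
    (hd₁ : (Y, S, Z) ≠ (Y₁, S₁, Z₁)) (hd₂ : (Y, S, Z) ≠ (Y₂, S₂, Z₂))
    (hd₁₂ : (Y₁, S₁, Z₁) ≠ (Y₂, S₂, Z₂))
    (hc₁ : ¬ SepOrthogonal (Y, S, Z) (Y₁, S₁, Z₁))
    (hc₂ : ¬ SepOrthogonal (Y, S, Z) (Y₂, S₂, Z₂))
    (s₁ s₂ s₁' s₂' : V)
    (he₁ : G.Adj s₁ s₁') (he₂ : G.Adj s₂ s₂')
    (hs₁ : S ∩ Y₁ = {s₁}) (hs₁' : S₁ ∩ Y = {s₁'})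
    (hs₂ : S ∩ Y₂ = {s₂}) (hs₂' : S₂ ∩ Y = {s₂'}) :
    (∀ u ∈ S, ∀ v ∈ S, ¬ G.Adj u v) ∧
    (Degenerate G Y S Z → (s₁ ≠ s₂ ∧ s₁ ≠ s₁' ∧ s₂ ≠ s₁') ∧ s₁' = s₂') ∧
    (¬ Degenerate G Y S Z →
      s₁ ≠ s₂ ∧ s₁ ≠ s₁' ∧ s₁ ≠ s₂' ∧ s₂ ≠ s₁' ∧ s₂ ≠ s₂' ∧ s₁' ≠ s₂') := by
  obtain ⟨hpT, hmin⟩ := h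
  have sep : IsSeparation G Y S Z := (hT.1 _ hpT).1
  have sep₁ : IsSeparation G Y₁ S₁ Z₁ := (hT.1 _ h₁.1).1
  have sep₂ : IsSeparation G Y₂ S₂ Z₂ := (hT.1 _ h₂.1).1
  have hlt : S.ncard < 4 := (hT.1 _ hpT).2
  have hlt₁ : S₁.ncard < 4 := (hT.1 _ h₁.1).2
  have hlt₂ : S₂.ncard < 4 := (hT.1 _ h₂.1).2
  have hZ : Z.Nonempty := hT.2.2.2 _ hpT
  have hs₁S : s₁ ∈ S := by
    have : s₁ ∈ S ∩ Y₁ := by rw [hs₁]; rfl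
    exact this.1
  have hs₁Y₁ : s₁ ∈ Y₁ := by
    have : s₁ ∈ S ∩ Y₁ := by rw [hs₁]; rfl
    exact this.2
  have hs₂S : s₂ ∈ S := by
    have : s₂ ∈ S ∩ Y₂ := by rw [hs₂]; rfl
    exact this.1
  have hs₂Y₂ : s₂ ∈ Y₂ := by
    have : s₂ ∈ S ∩ Y₂ := by rw [hs₂]; rfl
    exact this.2
  have hs₁'S₁ : s₁' ∈ S₁ := by
    have : s₁' ∈ S₁ ∩ Y := by rw [hs₁']; rfl
    exact this.1
  have hs₁'Y : s₁' ∈ Y := by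
    have : s₁' ∈ S₁ ∩ Y := by rw [hs₁']; rfl
    exact this.2
  have hs₂'S₂ : s₂' ∈ S₂ := by
    have : s₂' ∈ S₂ ∩ Y := by rw [hs₂']; rfl
    exact this.1
  have hs₂'Y : s₂' ∈ Y := by
    have : s₂' ∈ S₂ ∩ Y := by rw [hs₂']; rfl
    exact this.2
  have hS3 : S.ncard = 3 := by
    have := h3.2 Y S Z sep ⟨s₁', hs₁'Y⟩ hZ; omega
  have hS₁3 : S₁.ncard = 3 := by
    have := h3.2 Y₁ S₁ Z₁ sep₁ ⟨s₁, hs₁Y₁⟩ (hT.2.2.2 _ h₁.1); omega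
  have hS₂3 : S₂.ncard = 3 := by
    have := h3.2 Y₂ S₂ Z₂ sep₂ ⟨s₂, hs₂Y₂⟩ (hT.2.2.2 _ h₂.1); omega
  have hYY₁ : Y ∩ Y₁ = ∅ := disjY hT h3 ⟨hpT, hmin⟩ h₁ hd₁
  have hYY₂ : Y ∩ Y₂ = ∅ := disjY hT h3 ⟨hpT, hmin⟩ h₂ hd₂
  have hne12 : s₁ ≠ s₂ := by
    intro he
    have hmem : s₁ ∈ Y₁ ∩ Y₂ := ⟨hs₁Y₁, he ▸ hs₂Y₂⟩
    rw [disjY hT h3 h₁ h₂ hd₁₂] at hmem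
    exact hmem
  -- S ∩ S₁ = ∅ and S ∩ S₂ = ∅
  have hSS : ∀ Y' S' Z' : Set V, IsSeparation G Y' S' Z' → (Y', S', Z') ∈ T →
      S'.ncard = 3 → ∀ a b : V, S ∩ Y' = {a} → S' ∩ Y = {b} → S ∩ S' = ∅ := by
    intro Y' S' Z' sep' hpT' hS'3 a b ha hb
    have haS : a ∈ S := by
      have : a ∈ S ∩ Y' := by rw [ha]; rfl
      exact this.1
    have haY' : a ∈ Y' := by
      have : a ∈ S ∩ Y' := by rw [ha]; rfl
      exact this.2
    have hbS' : b ∈ S' := by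
      have : b ∈ S' ∩ Y := by rw [hb]; rfl
      exact this.1
    have hbY : b ∈ Y := by
      have : b ∈ S' ∩ Y := by rw [hb]; rfl
      exact this.2
    by_contra hc
    obtain ⟨t, htS, htS'⟩ := Set.nonempty_iff_ne_empty.mpr hc
    apply mincorner hT ⟨hpT, hmin⟩ hpT' sep sep' ?_ haY' (Or.inl haS)
    have hsub : (S ∩ Z') ∪ (S ∩ S') ∪ (S' ∩ Z) ⊆ (S \ {a}) ∪ (S' \ {b, t}) := by
      rintro c (((⟨h1, h2⟩ | ⟨h1, h2⟩) | ⟨h1, h2⟩))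
      · refine Or.inl ⟨h1, fun he => ?_⟩
        rw [Set.mem_singleton_iff] at he
        exact dj sep'.2.1 haY' (he ▸ h2)
      · refine Or.inl ⟨h1, fun he => ?_⟩
        rw [Set.mem_singleton_iff] at he
        exact dj sep'.1 haY' (he ▸ h2)
      · refine Or.inr ⟨h1, fun he => ?_⟩
        rcases he with he | he
        · exact dj sep.2.1 (he ▸ hbY) h2
        · rw [Set.mem_singleton_iff] at he
          exact dj sep.2.2.1 (he ▸ htS) h2
    have hc1 : (S \ {a}).ncard = 2 := by
      rw [Set.ncard_diff_singleton_of_mem haS, hS3]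
    have hc2 : (S' \ {b, t}).ncard = 1 := by
      have hps : ({b, t} : Set V) ⊆ S' := by
        rintro c hc'
        rcases hc' with rfl | hc'
        · exact hbS'
        · rw [Set.mem_singleton_iff] at hc'
          exact hc' ▸ htS'
      have hbt : b ≠ t := fun he => dj sep.1 hbY (he ▸ htS)
      rw [Set.ncard_diff hps, Set.ncard_pair hbt, hS'3]
    have k1 := Set.ncard_le_ncard hsub (Set.toFinite _)
    have k2 := Set.ncard_union_le (S \ {a}) (S' \ {b, t})
    omega
  have hSS₁ : S ∩ S₁ = ∅ := hSS Y₁ S₁ Z₁ sep₁ h₁.1 hS₁3 s₁ s₁' hs₁ hs₁'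
  have hSS₂ : S ∩ S₂ = ∅ := hSS Y₂ S₂ Z₂ sep₂ h₂.1 hS₂3 s₂ s₂' hs₂ hs₂'
  have hSZ₁ : ∀ v ∈ S, v ≠ s₁ → v ∈ Z₁ := by
    intro v hv hvne
    rcases sep_cases sep₁ v with hh | hh | hh
    · exfalso
      have : v ∈ S ∩ Y₁ := ⟨hv, hh⟩
      rw [hs₁, Set.mem_singleton_iff] at this
      exact hvne this
    · exfalso
      have : v ∈ S ∩ S₁ := ⟨hv, hh⟩
      rw [hSS₁] at this
      exact this
    · exact hh
  have hSZ₂ : ∀ v ∈ S, v ≠ s₂ → v ∈ Z₂ := by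
    intro v hv hvne
    rcases sep_cases sep₂ v with hh | hh | hh
    · exfalso
      have : v ∈ S ∩ Y₂ := ⟨hv, hh⟩
      rw [hs₂, Set.mem_singleton_iff] at this
      exact hvne this
    · exfalso
      have : v ∈ S ∩ S₂ := ⟨hv, hh⟩
      rw [hSS₂] at this
      exact this
    · exact hh
  have hYZ₁ : ∀ v ∈ Y, v ≠ s₁' → v ∈ Z₁ := by
    intro v hv hvne
    rcases sep_cases sep₁ v with hh | hh | hh
    · exfalso
      have : v ∈ Y ∩ Y₁ := ⟨hv, hh⟩
      rw [hYY₁] at this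
      exact this
    · exfalso
      have : v ∈ S₁ ∩ Y := ⟨hh, hv⟩
      rw [hs₁', Set.mem_singleton_iff] at this
      exact hvne this
    · exact hh
  have hYZ₂ : ∀ v ∈ Y, v ≠ s₂' → v ∈ Z₂ := by
    intro v hv hvne
    rcases sep_cases sep₂ v with hh | hh | hh
    · exfalso
      have : v ∈ Y ∩ Y₂ := ⟨hv, hh⟩
      rw [hYY₂] at this
      exact this
    · exfalso
      have : v ∈ S₂ ∩ Y := ⟨hh, hv⟩
      rw [hs₂', Set.mem_singleton_iff] at this
      exact hvne this
    · exact hh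
  have hSd : (S \ {s₁, s₂}).ncard = 1 := by
    have hps : ({s₁, s₂} : Set V) ⊆ S := by
      rintro c hc'
      rcases hc' with rfl | hc'
      · exact hs₁S
      · rw [Set.mem_singleton_iff] at hc'
        exact hc' ▸ hs₂S
    rw [Set.ncard_diff hps, Set.ncard_pair hne12, hS3]
  -- Part (1): S is independent
  have indep : ∀ u ∈ S, ∀ v ∈ S, ¬ G.Adj u v := by
    intro u hu v hv hadj
    have huv : u ≠ v := hadj.ne
    by_cases h1 : u = s₁
    · exact sep₁.2.2.2.2 s₁ hs₁Y₁ v (hSZ₁ v hv (fun he => huv (h1.trans he.symm)))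
        (h1 ▸ hadj)
    by_cases h2 : v = s₁
    · exact sep₁.2.2.2.2 s₁ hs₁Y₁ u (hSZ₁ u hu h1) (h2 ▸ hadj.symm)
    by_cases h3 : u = s₂
    · exact sep₂.2.2.2.2 s₂ hs₂Y₂ v (hSZ₂ v hv (fun he => huv (h3.trans he.symm)))
        (h3 ▸ hadj)
    by_cases h4 : v = s₂
    · exact sep₂.2.2.2.2 s₂ hs₂Y₂ u (hSZ₂ u hu h3) (h4 ▸ hadj.symm)
    obtain ⟨a, ha⟩ := Set.ncard_eq_one.mp hSd
    have hu' : u ∈ S \ {s₁, s₂} := ⟨hu, by simp [h1, h3]⟩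
    have hv' : v ∈ S \ {s₁, s₂} := ⟨hv, by simp [h2, h4]⟩
    rw [ha, Set.mem_singleton_iff] at hu' hv'
    exact huv (hu'.trans hv'.symm)
  have hn11 : s₁ ≠ s₁' := fun he => dj sep.1 hs₁'Y (he ▸ hs₁S)
  have hn21 : s₂ ≠ s₁' := fun he => dj sep.1 hs₁'Y (he ▸ hs₂S)
  have hn12 : s₁ ≠ s₂' := fun he => dj sep.1 hs₂'Y (he ▸ hs₁S)
  have hn22 : s₂ ≠ s₂' := fun he => dj sep.1 hs₂'Y (he ▸ hs₂S)
  refine ⟨indep, ?_, ?_⟩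
  · intro hdeg
    refine ⟨⟨hne12, hn11, hn21⟩, ?_⟩
    obtain ⟨a, ha⟩ := Set.ncard_eq_one.mp hdeg.1
    have e1 : s₁' = a := by rw [ha, Set.mem_singleton_iff] at hs₁'Y; exact hs₁'Y
    have e2 : s₂' = a := by rw [ha, Set.mem_singleton_iff] at hs₂'Y; exact hs₂'Y
    exact e1.trans e2.symm
  · intro hnd
    have hY1 : Y.ncard ≠ 1 := fun hh => hnd ⟨hh, indep⟩
    refine ⟨hne12, hn11, hn12, hn21, hn22, ?_⟩
    intro hee
    have hEx : ∃ u ∈ Y, u ≠ s₁' := by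
      by_contra hcc
      push_neg at hcc
      exact hY1 (by
        rw [Set.eq_singleton_iff_unique_mem.mpr ⟨hs₁'Y, hcc⟩]
        exact Set.ncard_singleton _)
    obtain ⟨u, huY, hus⟩ := hEx
    set A : Set V := Y \ {s₁'} with hAdef
    set B : Set V := insert s₁' (S \ {s₁, s₂}) with hBdef
    have hsepn : IsSeparation G ((A ∪ B)ᶜ) B A := by
      refine ⟨?_, ?_, ?_, ?_, ?_⟩
      · rw [Set.disjoint_left]; intro c hc hc'; exact hc (Or.inr hc')
      · rw [Set.disjoint_left]; intro c hc hc'; exact hc (Or.inl hc')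
      · rw [Set.disjoint_left]
        rintro c (rfl | ⟨hc1, _⟩) ⟨hd1, hd2⟩
        · exact hd2 rfl
        · exact dj sep.1 hd1 hc1
      · rw [Set.union_assoc, Set.union_comm B A, Set.compl_union_self]
      · intro c hc a ha hadj
        have haY : a ∈ Y := ha.1
        have hane : a ≠ s₁' := ha.2
        have haZ₁ : a ∈ Z₁ := hYZ₁ a haY hane
        have haZ₂ : a ∈ Z₂ := hYZ₂ a haY (fun he => hane (he.trans hee.symm))
        have hcZ : c ∉ Z := fun h => sep.2.2.2.2 a haY c h hadj.symm
        have hcY₁ : c ∉ Y₁ := fun h => sep₁.2.2.2.2 c h a haZ₁ hadj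
        have hcY₂ : c ∉ Y₂ := fun h => sep₂.2.2.2.2 c h a haZ₂ hadj
        apply hc
        rcases sep_cases sep c with h | h | h
        · by_cases hcs : c = s₁'
          · exact Or.inr (Or.inl hcs)
          · exact Or.inl ⟨h, hcs⟩
        · have hcs₁ : c ≠ s₁ := fun he => hcY₁ (he ▸ hs₁Y₁)
          have hcs₂ : c ≠ s₂ := fun he => hcY₂ (he ▸ hs₂Y₂)
          exact Or.inr (Or.inr ⟨h, by simp [hcs₁, hcs₂]⟩)
        · exact absurd h hcZ
    have hAne : A.Nonempty := ⟨u, huY, by simpa using hus⟩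
    have hCne : ((A ∪ B)ᶜ).Nonempty := by
      obtain ⟨z, hz⟩ := hZ
      refine ⟨z, fun hc => ?_⟩
      rcases hc with ⟨h, _⟩ | (rfl | ⟨h, _⟩)
      · exact dj sep.2.1 h hz
      · exact dj sep.2.1 hs₁'Y hz
      · exact dj sep.2.2.1 h hz
    have h3c := h3.2 _ _ _ hsepn hCne hAne
    have hBle : B.ncard ≤ 2 := by
      have hkk := Set.ncard_insert_le s₁' (S \ {s₁, s₂})
      rw [hBdef]
      omega
    omega
end
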